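/- arXiv:0711.4151 — 2 statements merged into one kernel-verified Lean document; each statement's English description precedes it below -/
import Mathlib

section
/- Suppose mn is even. The dimension of the perfect matching polytope P_T(m,n) of the m×n torus graph satisfies: (a) if n > 2 is even then dim P_T(1,n) = 1; (b) if n > 2 is even then dim P_T(2,n) = n + 1; (c) if n > 1 is odd then dim P_T(2,n) = n; (d) if m > 2 and n > 2 are both even then dim P_T(m,n) = mn + 1; (e) if m > 2 is even and n > 1 is odd then dim P_T(m,n) = mn. -/
set_option linter.unusedSectionVars false
set_option linter.unusedVariables false
set_option maxHeartbeats 1000000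


open Finset Pointwise

/-- The perfect matching polytope of a graph `G`: the convex hull in `ℝ^{Sym2 V}`
of the 0/1 incidence vectors of the perfect matchings of `G`. -/
noncomputable def pmPolytope {V : Type*} (G : SimpleGraph V) : Set (Sym2 V → ℝ) :=
  convexHull ℝ
    {x | ∃ M : G.Subgraph, M.IsPerfectMatching ∧ x = Set.indicator M.edgeSet 1}

/-- The number of lattice points in the dilate `t • P`. -/
noncomputable def latticeCount {ι : Type*} (P : Set (ι → ℝ)) (t : ℕ) : ℕ :=
  Nat.card {x : ι → ℤ // (fun i => (x i : ℝ)) ∈ (t : ℝ) • P}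

/-- The number of lattice points in the relative interior of the dilate `t • P`. -/
noncomputable def interiorLatticeCount {ι : Type*} (P : Set (ι → ℝ)) (t : ℕ) : ℕ :=
  Nat.card {x : ι → ℤ // (fun i => (x i : ℝ)) ∈ intrinsicInterior ℝ ((t : ℝ) • P)}

/-- A polytope `P` is Gorenstein of index `k` if `L_{P°}(t) = 0` for `0 < t < k`
and `L_{P°}(t) = L_P(t - k)` for all `t ≥ k`. -/
def IsGorensteinOfIndex {ι : Type*} (P : Set (ι → ℝ)) (k : ℕ) : Prop :=
  (∀ t : ℕ, 0 < t → t < k → interiorLatticeCount P t = 0) ∧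
  ∀ t : ℕ, k ≤ t → interiorLatticeCount P t = latticeCount P (t - k)

/-- The `m × n` grid graph: vertices `(i, j)` with `0 ≤ i < n`, `0 ≤ j < m`,
adjacent iff `|i - i'| + |j - j'| = 1`. -/
def gridGraph (m n : ℕ) : SimpleGraph (Fin n × Fin m) where
  Adj p q := Nat.dist p.1.val q.1.val + Nat.dist p.2.val q.2.val = 1
  symm := by
    refine ⟨?_⟩
    intro p q h
    simpa [Nat.dist_comm] using h
  loopless := by
    refine ⟨?_⟩
    intro p h
    simp [Nat.dist_self] at h

/-- The `m × n` torus graph: the grid graph together with the wrap-around edges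
`{(0,j),(n-1,j)}` and `{(i,0),(i,m-1)}`. -/
def torusGraph (m n : ℕ) : SimpleGraph (Fin n × Fin m) where
  Adj p q := p ≠ q ∧
    (Nat.dist p.1.val q.1.val + Nat.dist p.2.val q.2.val = 1 ∨
     (p.2 = q.2 ∧ ((p.1.val = 0 ∧ q.1.val = n - 1) ∨ (p.1.val = n - 1 ∧ q.1.val = 0))) ∨
     (p.1 = q.1 ∧ ((p.2.val = 0 ∧ q.2.val = m - 1) ∨ (p.2.val = m - 1 ∧ q.2.val = 0))))
  symm := by
    refine ⟨?_⟩
    rintro p q ⟨hne, h⟩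
    refine ⟨hne.symm, ?_⟩
    rcases h with h | ⟨h1, h2⟩ | ⟨h1, h2⟩
    · exact Or.inl (by simpa [Nat.dist_comm] using h)
    · exact Or.inr (Or.inl ⟨h1.symm, by tauto⟩)
    · exact Or.inr (Or.inr ⟨h1.symm, by tauto⟩)
  loopless := ⟨fun p h => h.1 rfl⟩

/-- A magic labelling of sum `t` of a graph `G`: a nonnegative integer label on each
edge (zero on non-edges) such that at every vertex the incident labels sum to `t`. -/
def IsMagicLabelling {V : Type*} [Fintype V] [DecidableEq V]
    (G : SimpleGraph V) (x : Sym2 V → ℕ) (t : ℕ) : Prop :=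
  (∀ e, e ∉ G.edgeSet → x e = 0) ∧
  ∀ v : V, ∑ e ∈ Finset.univ.filter (fun e : Sym2 V => v ∈ e), x e = t

/-- `T m n t` is the number of magic labellings of sum `t` of the grid graph `G(m,n)`. -/
noncomputable def T (m n t : ℕ) : ℕ :=
  Nat.card {x : Sym2 (Fin n × Fin m) → ℕ // IsMagicLabelling (gridGraph m n) x t}

/-- The dimension of a polytope: the dimension of its affine hull. -/
noncomputable def polytopeDim {ι : Type*} (P : Set (ι → ℝ)) : ℕ :=
  Module.finrank ℝ (vectorSpan ℝ P)

/-- `(h 0, …, h k)` is the Ehrhart h-vector of a `d`-dimensional integral polytope `P`: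
`∑_{t ≥ 0} L_P(t) z^t = (h_0 + h_1 z + ⋯ + h_k z^k)/(1 - z)^{d+1}` with `h k ≠ 0`,
expressed coefficientwise via `1/(1-z)^{d+1} = ∑_t C(t+d, d) z^t`. -/
def IsEhrhartHVector {ι : Type*} (P : Set (ι → ℝ)) (d : ℕ) (h : ℕ → ℤ) (k : ℕ) : Prop :=
  h k ≠ 0 ∧ (∀ j, k < j → h j = 0) ∧
  ∀ t : ℕ, (latticeCount P t : ℤ) =
    ∑ j ∈ Finset.range (k + 1), h j * ((t + d - j).choose d : ℤ)

/-- A finite sequence `h 0, …, h k` is unimodal. -/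
def UnimodalVec (h : ℕ → ℤ) (k : ℕ) : Prop :=
  ∃ j, j ≤ k ∧ (∀ i, i < j → h i ≤ h (i + 1)) ∧ (∀ i, j ≤ i → i < k → h (i + 1) ≤ h i)


section general
variable {V : Type*} [Fintype V] [DecidableEq V]

/-- the set of perfect matching indicator vectors -/
def PMset (G : SimpleGraph V) : Set (Sym2 V → ℝ) :=
  {x | ∃ M : G.Subgraph, M.IsPerfectMatching ∧ x = Set.indicator M.edgeSet 1}

lemma vectorSpan_pm (G : SimpleGraph V) :
    vectorSpan ℝ (pmPolytope G) = vectorSpan ℝ (PMset G) := by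
  rw [← direction_affineSpan ℝ (pmPolytope G), ← direction_affineSpan ℝ (PMset G),
    pmPolytope, affineSpan_convexHull]
  rfl

lemma pm_dim_eq (G : SimpleGraph V) :
    Module.finrank ℝ (vectorSpan ℝ (pmPolytope G)) =
      Module.finrank ℝ (vectorSpan ℝ (PMset G)) := by
  rw [vectorSpan_pm]

/-- vertex sum of a perfect matching indicator is 1 -/
lemma pm_vertex_sum {G : SimpleGraph V} {M : G.Subgraph} (hM : M.IsPerfectMatching)
    (v : V) :
    ∑ e ∈ Finset.univ.filter (fun e : Sym2 V => v ∈ e),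
      (Set.indicator M.edgeSet 1 : Sym2 V → ℝ) e = 1 := by
  classical
  obtain ⟨w, hw, huniq⟩ := SimpleGraph.Subgraph.isPerfectMatching_iff.mp hM v
  have key : (Finset.univ.filter (fun e : Sym2 V => v ∈ e)).filter
      (fun e => e ∈ M.edgeSet) = {s(v, w)} := by
    ext e
    simp only [Finset.mem_filter, Finset.mem_univ, true_and, Finset.mem_singleton]
    constructor
    · rintro ⟨hv, he⟩
      induction e with
      | h a b =>
        have hadj : M.Adj a b := SimpleGraph.Subgraph.mem_edgeSet.mp he
        rcases Sym2.mem_iff.mp hv with rfl | rfl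
        · rw [huniq b hadj]
        · rw [huniq a hadj.symm, Sym2.eq_swap]
    · rintro rfl
      exact ⟨Sym2.mem_mk_left v w, SimpleGraph.Subgraph.mem_edgeSet.mpr hw⟩
  calc ∑ e ∈ Finset.univ.filter (fun e : Sym2 V => v ∈ e),
        (Set.indicator M.edgeSet 1 : Sym2 V → ℝ) e
      = ∑ e ∈ Finset.univ.filter (fun e : Sym2 V => v ∈ e),
          if e ∈ M.edgeSet then (1:ℝ) else 0 := by
        refine Finset.sum_congr rfl fun e _ => ?_
        rw [Set.indicator_apply]; split <;> simp
    _ = ∑ e ∈ (Finset.univ.filter (fun e : Sym2 V => v ∈ e)).filter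
          (fun e => e ∈ M.edgeSet), (1:ℝ) := (Finset.sum_filter _ _).symm
    _ = 1 := by rw [key]; simp

/-- The ambient constraint subspace. -/
def Usub (G : SimpleGraph V) : Submodule ℝ (Sym2 V → ℝ) where
  carrier := {x | (∀ e, e ∉ G.edgeSet → x e = 0) ∧
      ∀ v : V, ∑ e ∈ Finset.univ.filter (fun e : Sym2 V => v ∈ e), x e = 0}
  add_mem' := by
    rintro x y ⟨hx1, hx2⟩ ⟨hy1, hy2⟩
    refine ⟨fun e he => by simp [hx1 e he, hy1 e he], fun v => ?_⟩
    simp only [Pi.add_apply, Finset.sum_add_distrib, hx2 v, hy2 v, add_zero]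
  zero_mem' := ⟨fun e _ => rfl, fun v => by simp⟩
  smul_mem' := by
    rintro c x ⟨hx1, hx2⟩
    refine ⟨fun e he => by simp [hx1 e he], fun v => ?_⟩
    simp only [Pi.smul_apply, smul_eq_mul, ← Finset.mul_sum, hx2 v, mul_zero]

lemma vectorSpan_le_Usub (G : SimpleGraph V) :
    vectorSpan ℝ (PMset G) ≤ Usub G := by
  rw [vectorSpan_def, Submodule.span_le]
  rintro d ⟨x, hx, y, hy, rfl⟩
  obtain ⟨M, hM, rfl⟩ := hx
  obtain ⟨N, hN, rfl⟩ := hy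
  constructor
  · intro e he
    have h1 : e ∉ M.edgeSet := fun h => he (M.edgeSet_subset h)
    have h2 : e ∉ N.edgeSet := fun h => he (N.edgeSet_subset h)
    simp [Set.indicator_apply, h1, h2]
  · intro v
    have hd : ((Set.indicator M.edgeSet 1 : Sym2 V → ℝ) -ᵥ
        (Set.indicator N.edgeSet 1 : Sym2 V → ℝ)) =
        fun e => (Set.indicator M.edgeSet 1 : Sym2 V → ℝ) e -
          (Set.indicator N.edgeSet 1 : Sym2 V → ℝ) e := rfl
    refine Eq.trans (Finset.sum_congr rfl fun e _ => congrFun hd e) ?_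
    simp only [Finset.sum_sub_distrib, pm_vertex_sum hM v, pm_vertex_sum hN v, sub_self]

lemma lower_bound_dim {G : SimpleGraph V} {κ : Type*} [Fintype κ]
    (f : κ → Sym2 V → ℝ) (hf : ∀ k, f k ∈ vectorSpan ℝ (PMset G))
    (hli : LinearIndependent ℝ f) :
    Fintype.card κ ≤ Module.finrank ℝ (vectorSpan ℝ (PMset G)) := by
  have h2 : LinearIndependent ℝ (fun k => (⟨f k, hf k⟩ : vectorSpan ℝ (PMset G))) := by
    apply LinearIndependent.of_comp (vectorSpan ℝ (PMset G)).subtype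
    exact hli
  exact h2.fintype_card_le_finrank

omit [Fintype V] [DecidableEq V] in
lemma mem_vectorSpan_of_pm {G : SimpleGraph V} {M N : G.Subgraph}
    (hM : M.IsPerfectMatching) (hN : N.IsPerfectMatching) :
    Set.indicator M.edgeSet 1 - Set.indicator N.edgeSet 1 ∈ vectorSpan ℝ (PMset G) :=
  vsub_mem_vectorSpan ℝ ⟨M, hM, rfl⟩ ⟨N, hN, rfl⟩

lemma upper_bound_dim {G : SimpleGraph V} {F : Type*} [AddCommGroup F] [Module ℝ F]
    [Module.Finite ℝ F] (φ : (Sym2 V → ℝ) →ₗ[ℝ] F)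
    (hinj : ∀ x ∈ Usub G, φ x = 0 → x = 0) :
    Module.finrank ℝ (vectorSpan ℝ (PMset G)) ≤ Module.finrank ℝ F := by
  have h1 : Module.finrank ℝ (vectorSpan ℝ (PMset G)) ≤ Module.finrank ℝ (Usub G) :=
    Submodule.finrank_mono (vectorSpan_le_Usub G)
  refine h1.trans ?_
  have : Function.Injective (φ.comp (Usub G).subtype) := by
    rw [← LinearMap.ker_eq_bot, LinearMap.ker_eq_bot']
    rintro ⟨x, hx⟩ h
    exact Subtype.ext (hinj x hx (by simpa using h))
  exact LinearMap.finrank_le_finrank_of_injective this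

end general
section finhelp
variable {n : ℕ} [NeZero n]

lemma val_add_one' (i : Fin n) : (i+1).val = if i.val+1 = n then 0 else i.val+1 := by
  have h1 : (1 : Fin n).val = 1 % n := Fin.val_one' n
  have : (i+1).val = (i.val + 1 % n) % n := by rw [Fin.add_def, ← h1]
  rw [this]
  have hn : 0 < n := Nat.pos_of_ne_zero (NeZero.ne n)
  have hi := i.isLt
  rcases Nat.lt_or_ge 1 n with h | h
  · rw [Nat.mod_eq_of_lt h]
    split
    · next heq => rw [heq, Nat.mod_self]
    · next hne => exact Nat.mod_eq_of_lt (by omega)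
  · have hn1 : n = 1 := by omega
    subst hn1
    have hi0 : i.val = 0 := by omega
    rw [hi0]
    simp

lemma val_sub_one' (i : Fin n) : (i-1).val = if i.val = 0 then n-1 else i.val - 1 := by
  have h1 : (1 : Fin n).val = 1 % n := Fin.val_one' n
  have : (i-1).val = (n - 1 % n + i.val) % n := by rw [Fin.sub_def, ← h1]
  rw [this]
  have hn : 0 < n := Nat.pos_of_ne_zero (NeZero.ne n)
  have hi := i.isLt
  rcases Nat.lt_or_ge 1 n with h | h
  · rw [Nat.mod_eq_of_lt h]
    split
    · next heq => rw [heq, Nat.add_zero]; exact Nat.mod_eq_of_lt (by omega)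
    · next hne =>
        have : n - 1 + i.val = n + (i.val - 1) := by omega
        rw [this, Nat.add_mod_left]
        exact Nat.mod_eq_of_lt (by omega)
  · have hn1 : n = 1 := by omega
    subst hn1
    have hi0 : i.val = 0 := by omega
    rw [hi0]
    simp

lemma sub_one_add_one' (i : Fin n) : (i - 1) + 1 = i := sub_add_cancel i 1

lemma add_one_sub_one' (i : Fin n) : (i + 1) - 1 = i := add_sub_cancel_right i 1

lemma add_one_ne (hn : 1 < n) (i : Fin n) : i + 1 ≠ i := by
  intro h
  have := congrArg Fin.val h
  rw [val_add_one'] at this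
  split at this <;> omega

lemma add_two_ne (hn : 2 < n) (i : Fin n) : i + 1 + 1 ≠ i := by
  intro h
  have := congrArg Fin.val h
  rw [val_add_one', val_add_one'] at this
  split at this <;> split at this <;> omega

lemma parity_flip (hm : 2 ∣ n) (i : Fin n) : ¬ ((i+1).val % 2 = i.val % 2) := by
  rw [val_add_one']
  have hi := i.isLt
  split <;> omega

/-- kill mod-2 bookkeeping -/
lemma mod2_cases (a : ℕ) : a % 2 = 0 ∨ a % 2 = 1 := by omega

end finhelp

/- ### Torus graph basics -/
section torus
variable {m n : ℕ} [NeZero m] [NeZero n]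

/-- horizontal edge -/
def hE (i : Fin n) (j : Fin m) : Sym2 (Fin n × Fin m) := s((i,j), (i+1,j))
/-- vertical edge -/
def vE (i : Fin n) (j : Fin m) : Sym2 (Fin n × Fin m) := s((i,j), (i,j+1))

lemma adj_horiz (hn : 1 < n) (i : Fin n) (j : Fin m) :
    (torusGraph m n).Adj (i,j) (i+1,j) := by
  have hv := val_add_one' i
  show _ ≠ _ ∧ _
  refine ⟨fun h => add_one_ne hn i (congrArg Prod.fst h).symm, ?_⟩
  by_cases hc : i.val + 1 = n
  · refine Or.inr (Or.inl ⟨rfl, Or.inr ⟨?_, ?_⟩⟩)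
    · show i.val = n - 1; omega
    · show (i+1 : Fin n).val = 0; rw [hv, if_pos hc]
  · rw [hv, if_neg hc]
    refine Or.inl ?_
    simp [Nat.dist, hv, if_neg hc]

lemma adj_vert (hm : 1 < m) (i : Fin n) (j : Fin m) :
    (torusGraph m n).Adj (i,j) (i,j+1) := by
  have hv := val_add_one' j
  show _ ≠ _ ∧ _
  refine ⟨fun h => add_one_ne hm j (congrArg Prod.snd h).symm, ?_⟩
  by_cases hc : j.val + 1 = m
  · refine Or.inr (Or.inr ⟨rfl, Or.inr ⟨?_, ?_⟩⟩)
    · show j.val = m - 1; omega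
    · show (j+1 : Fin m).val = 0; rw [hv, if_pos hc]
  · rw [hv, if_neg hc]
    refine Or.inl ?_
    simp [Nat.dist, hv, if_neg hc]

/-- neighbour classification -/
lemma torus_adj_cases {i : Fin n} {j : Fin m} {q : Fin n × Fin m}
    (h : (torusGraph m n).Adj (i,j) q) :
    q = (i+1, j) ∨ q = (i-1, j) ∨ q = (i, j+1) ∨ q = (i, j-1) := by
  change _ ≠ _ ∧ _ at h
  obtain ⟨hne, hc⟩ := h
  obtain ⟨a, b⟩ := q
  have hia := a.isLt
  have hjb := b.isLt
  have hii := i.isLt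
  have hjj := j.isLt
  rcases hc with hd | ⟨h2, h1⟩ | ⟨h1, h2⟩
  · -- dist case
    simp only [Nat.dist] at hd
    rcases Nat.lt_or_ge i.val a.val with hlt | hge
    · -- a = i+1, b = j
      left
      have hb : b = j := Fin.ext (by omega)
      have ha : a = i + 1 := Fin.ext (by rw [val_add_one']; split <;> omega)
      rw [ha, hb]
    · rcases Nat.lt_or_ge a.val i.val with hlt2 | hge2
      · -- a = i - 1
        rcases Nat.lt_or_ge j.val b.val with hv | hv
        · omega
        · rcases Nat.lt_or_ge b.val j.val with hv2 | hv2
          · omega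
          · right; left
            have hb : b = j := Fin.ext (by omega)
            have ha : a = i - 1 := Fin.ext (by rw [val_sub_one']; split <;> omega)
            rw [ha, hb]
      · -- a = i, second coordinate
        have ha : a = i := Fin.ext (by omega)
        rcases Nat.lt_or_ge j.val b.val with hv | hv
        · right; right; left
          have hb : b = j + 1 := Fin.ext (by rw [val_add_one']; split <;> omega)
          rw [ha, hb]
        · rcases Nat.lt_or_ge b.val j.val with hv2 | hv2
          · right; right; right
            have hb : b = j - 1 := Fin.ext (by rw [val_sub_one']; split <;> omega)
            rw [ha, hb]
          · exfalso; exact hne (by rw [ha]; exact congrArg _ (Fin.ext (by omega)).symm)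
  · -- horizontal wrap
    try simp only at h1 h2
    have hb : b = j := h2.symm
    rcases h1 with ⟨hi0, han⟩ | ⟨hin, ha0⟩
    · -- i = 0, a = n-1 : a = i - 1
      right; left
      have ha : a = i - 1 := Fin.ext (by rw [val_sub_one']; split <;> omega)
      rw [ha, hb]
    · -- i = n-1, a = 0 : a = i + 1
      left
      have ha : a = i + 1 := Fin.ext (by rw [val_add_one']; split <;> omega)
      rw [ha, hb]
  · -- vertical wrap
    try simp only at h1 h2
    have ha : a = i := h1.symm
    rcases h2 with ⟨hj0, hbm⟩ | ⟨hjm, hb0⟩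
    · right; right; right
      have hb : b = j - 1 := Fin.ext (by rw [val_sub_one']; split <;> omega)
      rw [ha, hb]
    · right; right; left
      have hb : b = j + 1 := Fin.ext (by rw [val_add_one']; split <;> omega)
      rw [ha, hb]

end torus

/- ### Matchings -/
section matchings
variable {m n : ℕ} [NeZero m] [NeZero n]

def VmatAdj (ph : Fin n → ℕ) (p q : Fin n × Fin m) : Prop :=
  p.1 = q.1 ∧ ((q.2 = p.2 + 1 ∧ p.2.val % 2 = ph p.1 % 2) ∨
               (p.2 = q.2 + 1 ∧ q.2.val % 2 = ph q.1 % 2))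

def Vmat (hm1 : 1 < m) (ph : Fin n → ℕ) : (torusGraph m n).Subgraph where
  verts := Set.univ
  Adj := VmatAdj ph
  adj_sub := by
    rintro ⟨a,b⟩ ⟨c,d⟩ ⟨h1, h2⟩
    dsimp only [VmatAdj] at h1 h2
    subst h1
    rcases h2 with ⟨hd, _⟩ | ⟨hb, _⟩
    · subst hd
      exact adj_vert hm1 a b
    · subst hb
      exact (adj_vert hm1 a d).symm
  edge_vert := fun _ => Set.mem_univ _
  symm := by refine ⟨?_⟩; rintro ⟨a,b⟩ ⟨c,d⟩ ⟨h1,h2⟩; exact ⟨h1.symm, by tauto⟩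

lemma vmat_adj (hm1 : 1 < m) (ph : Fin n → ℕ) (p q : Fin n × Fin m) :
    (Vmat hm1 ph).Adj p q ↔ VmatAdj ph p q := Iff.rfl

lemma vmat_pm (hm1 : 1 < m) (hm2 : 2 ∣ m) (ph : Fin n → ℕ) :
    (Vmat (n := n) hm1 ph).IsPerfectMatching := by
  rw [SimpleGraph.Subgraph.isPerfectMatching_iff]
  rintro ⟨a, b⟩
  by_cases hp : b.val % 2 = ph a % 2
  · refine ⟨(a, b+1), ⟨rfl, Or.inl ⟨rfl, hp⟩⟩, ?_⟩
    rintro ⟨c, d⟩ ⟨h1, h2⟩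
    dsimp only [VmatAdj] at h1 h2
    subst h1
    rcases h2 with ⟨hd, _⟩ | ⟨hb, hq⟩
    · subst hd; rfl
    · exfalso
      have hpf := parity_flip hm2 d
      rw [← hb] at hpf
      omega
  · have hpar : (b-1).val % 2 = ph a % 2 := by
      have h1 := parity_flip hm2 (b-1)
      rw [sub_one_add_one'] at h1
      omega
    refine ⟨(a, b-1), ⟨rfl, Or.inr ⟨(sub_one_add_one' b).symm, hpar⟩⟩, ?_⟩
    rintro ⟨c, d⟩ ⟨h1, h2⟩
    dsimp only [VmatAdj] at h1 h2
    subst h1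
    rcases h2 with ⟨hd, hq⟩ | ⟨hb, hq⟩
    · exact absurd hq hp
    · have hd : d = b - 1 := by rw [hb, add_one_sub_one']
      rw [hd]

def HmatAdj (ph : Fin m → ℕ) (p q : Fin n × Fin m) : Prop :=
  p.2 = q.2 ∧ ((q.1 = p.1 + 1 ∧ p.1.val % 2 = ph p.2 % 2) ∨
               (p.1 = q.1 + 1 ∧ q.1.val % 2 = ph q.2 % 2))

def Hmat (hn1 : 1 < n) (ph : Fin m → ℕ) : (torusGraph m n).Subgraph where
  verts := Set.univ
  Adj := HmatAdj ph
  adj_sub := by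
    rintro ⟨a,b⟩ ⟨c,d⟩ ⟨h1, h2⟩
    dsimp only [HmatAdj] at h1 h2
    subst h1
    rcases h2 with ⟨hd, _⟩ | ⟨hb, _⟩
    · subst hd
      exact adj_horiz hn1 a b
    · subst hb
      exact (adj_horiz hn1 c b).symm
  edge_vert := fun _ => Set.mem_univ _
  symm := by refine ⟨?_⟩; rintro ⟨a,b⟩ ⟨c,d⟩ ⟨h1,h2⟩; exact ⟨h1.symm, by tauto⟩

lemma hmat_pm (hn1 : 1 < n) (hn2 : 2 ∣ n) (ph : Fin m → ℕ) :
    (Hmat (m := m) hn1 ph).IsPerfectMatching := by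
  rw [SimpleGraph.Subgraph.isPerfectMatching_iff]
  rintro ⟨a, b⟩
  by_cases hp : a.val % 2 = ph b % 2
  · refine ⟨(a+1, b), ⟨rfl, Or.inl ⟨rfl, hp⟩⟩, ?_⟩
    rintro ⟨c, d⟩ ⟨h1, h2⟩
    dsimp only [HmatAdj] at h1 h2
    subst h1
    rcases h2 with ⟨hd, _⟩ | ⟨hb, hq⟩
    · subst hd; rfl
    · exfalso
      have hpf := parity_flip hn2 c
      rw [← hb] at hpf
      omega
  · have hpar : (a-1).val % 2 = ph b % 2 := by
      have h1 := parity_flip hn2 (a-1)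
      rw [sub_one_add_one'] at h1
      omega
    refine ⟨(a-1, b), ⟨rfl, Or.inr ⟨(sub_one_add_one' a).symm, hpar⟩⟩, ?_⟩
    rintro ⟨c, d⟩ ⟨h1, h2⟩
    dsimp only [HmatAdj] at h1 h2
    subst h1
    rcases h2 with ⟨hd, hq⟩ | ⟨hb, hq⟩
    · exact absurd hq hp
    · have hd : c = a - 1 := by rw [hb, add_one_sub_one']
      rw [hd]

/-- membership in the `2×2` square at `(i0, j0)` -/
def inSq (i0 : Fin n) (j0 : Fin m) (p : Fin n × Fin m) : Prop :=
  (p.1 = i0 ∨ p.1 = i0 + 1) ∧ (p.2 = j0 ∨ p.2 = j0 + 1)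

def NAdj (i0 : Fin n) (j0 : Fin m) (p q : Fin n × Fin m) : Prop :=
  (p.2 = q.2 ∧ (p.2 = j0 ∨ p.2 = j0 + 1) ∧
     ((q.1 = p.1 + 1 ∧ p.1 = i0) ∨ (p.1 = q.1 + 1 ∧ q.1 = i0))) ∨
  (¬ inSq i0 j0 p ∧ ¬ inSq i0 j0 q ∧ p.1 = q.1 ∧
     ((q.2 = p.2 + 1 ∧ p.2.val % 2 = j0.val % 2) ∨ (p.2 = q.2 + 1 ∧ q.2.val % 2 = j0.val % 2)))

def Nsq (hm1 : 1 < m) (hn1 : 1 < n) (i0 : Fin n) (j0 : Fin m) :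
    (torusGraph m n).Subgraph where
  verts := Set.univ
  Adj := NAdj i0 j0
  adj_sub := by
    rintro ⟨a,b⟩ ⟨c,d⟩ (⟨h1, _, h3⟩ | ⟨_, _, h1, h3⟩) <;> dsimp only at h1 h3 <;> subst h1
    · rcases h3 with ⟨hc, _⟩ | ⟨hc, _⟩
      · subst hc
        exact adj_horiz hn1 a b
      · subst hc
        exact (adj_horiz hn1 c b).symm
    · rcases h3 with ⟨hc, _⟩ | ⟨hc, _⟩
      · subst hc
        exact adj_vert hm1 a b
      · subst hc
        exact (adj_vert hm1 a d).symm
  edge_vert := fun _ => Set.mem_univ _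
  symm := by
    refine ⟨?_⟩
    rintro ⟨a,b⟩ ⟨c,d⟩ (⟨h1, h2, h3⟩ | ⟨hp, hq, h1, h3⟩)
    · dsimp only at h1; subst h1
      exact Or.inl ⟨rfl, h2, by tauto⟩
    · exact Or.inr ⟨hq, hp, h1.symm, by tauto⟩

lemma nsq_pm (hm1 : 1 < m) (hn1 : 1 < n) (hm2 : 2 ∣ m) (i0 : Fin n) (j0 : Fin m) :
    (Nsq hm1 hn1 i0 j0).IsPerfectMatching := by
  rw [SimpleGraph.Subgraph.isPerfectMatching_iff]
  rintro ⟨a, b⟩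
  by_cases hs : inSq i0 j0 (a, b)
  · obtain ⟨ha, hb⟩ := hs
    dsimp only at ha hb
    rcases ha with ha | ha
    · subst ha
      refine ⟨(a+1, b), Or.inl ⟨rfl, hb, Or.inl ⟨rfl, rfl⟩⟩, ?_⟩
      rintro ⟨c, d⟩ (⟨h1, h2, h3⟩ | ⟨hp, _, _, _⟩)
      · dsimp only at h1 h3
        rcases h3 with ⟨hc, _⟩ | ⟨hc1, hc2⟩
        · rw [hc, ← h1]
        · exfalso
          rw [hc2] at hc1
          exact add_one_ne hn1 a hc1.symm
      · exact absurd ⟨Or.inl rfl, hb⟩ hp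
    · subst ha
      refine ⟨(i0, b), Or.inl ⟨rfl, hb, Or.inr ⟨rfl, rfl⟩⟩, ?_⟩
      rintro ⟨c, d⟩ (⟨h1, h2, h3⟩ | ⟨hp, _, _, _⟩)
      · dsimp only at h1 h3
        rcases h3 with ⟨hc1, hc2⟩ | ⟨hc1, hc2⟩
        · exact absurd hc2 (add_one_ne hn1 i0)
        · rw [hc2, ← h1]
      · exact absurd ⟨Or.inr rfl, hb⟩ hp
  · by_cases hp : b.val % 2 = j0.val % 2
    · have hnot : ¬ inSq i0 j0 (a, b+1) := by
        rintro ⟨hc1, hc2⟩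
        dsimp only at hc1 hc2
        rcases hc2 with hc2 | hc2
        · have hpf := parity_flip hm2 b
          rw [hc2] at hpf
          omega
        · exact hs ⟨hc1, Or.inl (add_right_cancel hc2)⟩
      refine ⟨(a, b+1), Or.inr ⟨hs, hnot, rfl, Or.inl ⟨rfl, hp⟩⟩, ?_⟩
      rintro ⟨c, d⟩ (⟨_, h2, h3⟩ | ⟨_, hq, h1, h3⟩)
      · exfalso
        dsimp only at h2 h3
        refine hs ⟨?_, h2⟩
        rcases h3 with ⟨_, hc⟩ | ⟨hc1, hc2⟩
        · exact Or.inl hc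
        · rw [hc1, hc2]; exact Or.inr rfl
      · dsimp only at h1 h3
        subst h1
        rcases h3 with ⟨hd, _⟩ | ⟨hb2, hq2⟩
        · rw [hd]
        · exfalso
          have hpf := parity_flip hm2 d
          rw [← hb2] at hpf
          omega
    · have hpar : (b-1).val % 2 = j0.val % 2 := by
        have h1 := parity_flip hm2 (b-1)
        rw [sub_one_add_one'] at h1
        omega
      have hnot : ¬ inSq i0 j0 (a, b-1) := by
        rintro ⟨hc1, hc2⟩
        dsimp only at hc1 hc2
        rcases hc2 with hc2 | hc2
        · have hb' : b = j0 + 1 := by rw [← hc2, sub_one_add_one']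
          exact hs ⟨hc1, Or.inr hb'⟩
        · have hpf := parity_flip hm2 j0
          rw [← hc2] at hpf
          omega
      refine ⟨(a, b-1), Or.inr ⟨hs, hnot, rfl, Or.inr ⟨(sub_one_add_one' b).symm, hpar⟩⟩, ?_⟩
      rintro ⟨c, d⟩ (⟨_, h2, h3⟩ | ⟨_, hq, h1, h3⟩)
      · exfalso
        dsimp only at h2 h3
        refine hs ⟨?_, h2⟩
        rcases h3 with ⟨_, hc⟩ | ⟨hc1, hc2⟩
        · exact Or.inl hc
        · rw [hc1, hc2]; exact Or.inr rfl
      · dsimp only at h1 h3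
        subst h1
        rcases h3 with ⟨hd, hq2⟩ | ⟨hb2, hq2⟩
        · exact absurd hq2 hp
        · have hd : d = b - 1 := by rw [hb2, add_one_sub_one']
          rw [hd]

end matchings

/- ### Edge identities and membership -/
section edges
variable {m n : ℕ} [NeZero m] [NeZero n]

lemma hE_ne_vE (hn : 1 < n) (i i' : Fin n) (j j' : Fin m) : hE i j ≠ vE i' j' := by
  intro h
  rw [hE, vE, Sym2.eq_iff] at h
  rcases h with ⟨h1, h2⟩ | ⟨h1, h2⟩
  · have e1 : i = i' := congrArg Prod.fst h1
    have e2 : i + 1 = i' := congrArg Prod.fst h2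
    rw [e1] at e2
    exact add_one_ne hn i' e2
  · have e1 : i = i' := congrArg Prod.fst h1
    have e2 : i + 1 = i' := congrArg Prod.fst h2
    rw [e1] at e2
    exact add_one_ne hn i' e2

lemma hE_inj (hn : 2 < n) {i i' : Fin n} {j j' : Fin m} (h : hE i j = hE i' j') :
    i = i' ∧ j = j' := by
  rw [hE, hE, Sym2.eq_iff] at h
  rcases h with ⟨h1, h2⟩ | ⟨h1, h2⟩
  · exact ⟨congrArg Prod.fst h1, congrArg Prod.snd h1⟩
  · exfalso
    have e1 : i = i' + 1 := congrArg Prod.fst h1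
    have e2 : i + 1 = i' := congrArg Prod.fst h2
    rw [← e2] at e1
    exact add_two_ne hn i e1.symm

lemma vE_inj (hm : 2 < m) {i i' : Fin n} {j j' : Fin m} (h : vE i j = vE i' j') :
    i = i' ∧ j = j' := by
  rw [vE, vE, Sym2.eq_iff] at h
  rcases h with ⟨h1, h2⟩ | ⟨h1, h2⟩
  · exact ⟨congrArg Prod.fst h1, congrArg Prod.snd h1⟩
  · exfalso
    have e1 : j = j' + 1 := congrArg Prod.snd h1
    have e2 : j + 1 = j' := congrArg Prod.snd h2
    rw [← e2] at e1
    exact add_two_ne hm j e1.symm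

lemma sub_one_ne' (hn : 1 < n) (i : Fin n) : i - 1 ≠ i := by
  intro h
  have := sub_one_add_one' i
  nth_rewrite 2 [← h] at this
  exact add_one_ne hn (i-1) this

lemma mem_hE_left (i : Fin n) (j : Fin m) : (i, j) ∈ hE i j := Sym2.mem_mk_left _ _
lemma mem_hE_right (i : Fin n) (j : Fin m) : (i+1, j) ∈ hE i j := Sym2.mem_mk_right _ _
lemma mem_vE_left (i : Fin n) (j : Fin m) : (i, j) ∈ vE i j := Sym2.mem_mk_left _ _
lemma mem_vE_right (i : Fin n) (j : Fin m) : (i, j+1) ∈ vE i j := Sym2.mem_mk_right _ _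

lemma hE_not_mem_vmat (hm1 : 1 < m) (hn : 1 < n) (ph : Fin n → ℕ) (i : Fin n) (j : Fin m) :
    hE i j ∉ (Vmat hm1 ph).edgeSet := by
  rw [hE, SimpleGraph.Subgraph.mem_edgeSet]
  rintro ⟨h1, -⟩
  exact add_one_ne hn i (show i + 1 = i from h1.symm)

lemma vE_mem_vmat (hm1 : 1 < m) (hm : 2 < m) (ph : Fin n → ℕ) (i : Fin n) (j : Fin m) :
    vE i j ∈ (Vmat hm1 ph).edgeSet ↔ j.val % 2 = ph i % 2 := by
  rw [vE, SimpleGraph.Subgraph.mem_edgeSet]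
  constructor
  · rintro ⟨h1, ⟨-, h2⟩ | ⟨h2, -⟩⟩
    · exact h2
    · exact absurd (show j + 1 + 1 = j by rw [← h2]) (add_two_ne hm j)
  · intro h
    exact ⟨rfl, Or.inl ⟨rfl, h⟩⟩

lemma vE_not_mem_hmat (hn1 : 1 < n) (hm : 1 < m) (ph : Fin m → ℕ) (i : Fin n) (j : Fin m) :
    vE i j ∉ (Hmat hn1 ph).edgeSet := by
  rw [vE, SimpleGraph.Subgraph.mem_edgeSet]
  rintro ⟨h1, -⟩
  exact add_one_ne hm j (show j + 1 = j from h1.symm)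

lemma hE_mem_hmat (hn1 : 1 < n) (hn : 2 < n) (ph : Fin m → ℕ) (i : Fin n) (j : Fin m) :
    hE i j ∈ (Hmat hn1 ph).edgeSet ↔ i.val % 2 = ph j % 2 := by
  rw [hE, SimpleGraph.Subgraph.mem_edgeSet]
  constructor
  · rintro ⟨h1, ⟨-, h2⟩ | ⟨h2, -⟩⟩
    · exact h2
    · exact absurd (show i + 1 + 1 = i by rw [← h2]) (add_two_ne hn i)
  · intro h
    exact ⟨rfl, Or.inl ⟨rfl, h⟩⟩

lemma vE_mem_nsq (hm1 : 1 < m) (hn1 : 1 < n) (hm : 2 < m) (i0 : Fin n) (j0 : Fin m)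
    (i : Fin n) (j : Fin m) :
    vE i j ∈ (Nsq hm1 hn1 i0 j0).edgeSet ↔
      (¬ inSq i0 j0 (i,j) ∧ ¬ inSq i0 j0 (i,j+1) ∧ j.val % 2 = j0.val % 2) := by
  rw [vE, SimpleGraph.Subgraph.mem_edgeSet]
  constructor
  · rintro (⟨h1, -, -⟩ | ⟨hp, hq, -, ⟨-, h2⟩ | ⟨h2, -⟩⟩)
    · exact absurd (show j + 1 = j from h1.symm) (add_one_ne hm1 j)
    · exact ⟨hp, hq, h2⟩
    · exact absurd (show j + 1 + 1 = j by rw [← h2]) (add_two_ne hm j)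
  · rintro ⟨hp, hq, h⟩
    exact Or.inr ⟨hp, hq, rfl, Or.inl ⟨rfl, h⟩⟩

lemma hE_mem_nsq (hm1 : 1 < m) (hn1 : 1 < n) (hn : 2 < n) (i0 : Fin n) (j0 : Fin m)
    (i : Fin n) (j : Fin m) :
    hE i j ∈ (Nsq hm1 hn1 i0 j0).edgeSet ↔ (i = i0 ∧ (j = j0 ∨ j = j0 + 1)) := by
  rw [hE, SimpleGraph.Subgraph.mem_edgeSet]
  constructor
  · rintro (⟨-, h2, ⟨-, h3⟩ | ⟨h3, h4⟩⟩ | ⟨-, -, h1, -⟩)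
    · exact ⟨h3, h2⟩
    · exact absurd (show i + 1 + 1 = i by rw [← h3]) (add_two_ne hn i)
    · exact absurd (show i + 1 = i from h1.symm) (add_one_ne hn1 i)
  · rintro ⟨h1, h2⟩
    exact Or.inl ⟨rfl, h2, Or.inl ⟨rfl, h1⟩⟩

end edges

/- ### Vertex equations for elements of Usub -/
section vertexeq
variable {m n : ℕ} [NeZero m] [NeZero n]

lemma hE_left_rw (i : Fin n) (j : Fin m) : hE (i-1) j = s((i-1,j),(i,j)) := by
  rw [hE, sub_one_add_one']

lemma vE_left_rw (i : Fin n) (j : Fin m) : vE i (j-1) = s((i,j-1),(i,j)) := by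
  rw [vE, sub_one_add_one']

lemma edge_rep {e : Sym2 (Fin n × Fin m)} (he : e ∈ (torusGraph m n).edgeSet) :
    (∃ i j, e = hE i j) ∨ (∃ i j, e = vE i j) := by
  induction e with
  | h p q =>
    obtain ⟨i, j⟩ := p
    have hadj : (torusGraph m n).Adj (i,j) q := he
    rcases torus_adj_cases hadj with rfl | rfl | rfl | rfl
    · exact Or.inl ⟨i, j, rfl⟩
    · refine Or.inl ⟨i-1, j, ?_⟩
      rw [hE_left_rw, Sym2.eq_swap]
    · exact Or.inr ⟨i, j, rfl⟩
    · refine Or.inr ⟨i, j-1, ?_⟩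
      rw [vE_left_rw, Sym2.eq_swap]

lemma edge_with_vertex {i : Fin n} {j : Fin m} {e : Sym2 (Fin n × Fin m)}
    (hedge : e ∈ (torusGraph m n).edgeSet) (hmem : (i,j) ∈ e) :
    e = hE (i-1) j ∨ e = hE i j ∨ e = vE i (j-1) ∨ e = vE i j := by
  induction e with
  | h p q =>
    rcases Sym2.mem_iff.mp hmem with rfl | rfl
    · have hadj : (torusGraph m n).Adj (i, j) q := hedge
      rcases torus_adj_cases hadj with rfl | rfl | rfl | rfl
      · right; left; rfl
      · left; rw [hE_left_rw, Sym2.eq_swap]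
      · right; right; right; rfl
      · right; right; left; rw [vE_left_rw, Sym2.eq_swap]
    · have hadj : (torusGraph m n).Adj p (i, j) := hedge
      rcases torus_adj_cases hadj.symm with rfl | rfl | rfl | rfl
      · right; left; rw [hE, Sym2.eq_swap]
      · left; rw [hE_left_rw]
      · right; right; right; rw [vE, Sym2.eq_swap]
      · right; right; left; rw [vE_left_rw]

lemma vertex_sum_T {x : Sym2 (Fin n × Fin m) → ℝ}
    (hx : x ∈ Usub (torusGraph m n)) (i : Fin n) (j : Fin m) :
    ∑ e ∈ ({hE (i-1) j, hE i j, vE i (j-1), vE i j} : Finset (Sym2 (Fin n × Fin m))),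
      x e = 0 := by
  classical
  rw [← hx.2 (i,j)]
  apply Finset.sum_subset
  · intro e he
    simp only [Finset.mem_insert, Finset.mem_singleton] at he
    simp only [Finset.mem_filter, Finset.mem_univ, true_and]
    rcases he with rfl | rfl | rfl | rfl
    · rw [hE_left_rw]; exact Sym2.mem_mk_right _ _
    · exact mem_hE_left i j
    · rw [vE_left_rw]; exact Sym2.mem_mk_right _ _
    · exact mem_vE_left i j
  · intro e hmem hnot
    simp only [Finset.mem_filter, Finset.mem_univ, true_and] at hmem
    by_cases hedge : e ∈ (torusGraph m n).edgeSet
    · exfalso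
      apply hnot
      simp only [Finset.mem_insert, Finset.mem_singleton]
      exact edge_with_vertex hedge hmem
    · exact hx.1 e hedge

lemma vertex_eq_gen (hm : 2 < m) (hn : 2 < n) {x : Sym2 (Fin n × Fin m) → ℝ}
    (hx : x ∈ Usub (torusGraph m n)) (i : Fin n) (j : Fin m) :
    x (hE (i-1) j) + x (hE i j) + x (vE i (j-1)) + x (vE i j) = 0 := by
  classical
  have hm1 : 1 < m := by omega
  have hn1 : 1 < n := by omega
  have h := vertex_sum_T hx i j
  have d1 : hE (i-1) j ≠ hE i j := fun h => sub_one_ne' hn1 i (hE_inj hn h).1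
  have d2 : hE (i-1) j ≠ vE i (j-1) := hE_ne_vE hn1 _ _ _ _
  have d3 : hE (i-1) j ≠ vE i j := hE_ne_vE hn1 _ _ _ _
  have d4 : hE i j ≠ vE i (j-1) := hE_ne_vE hn1 _ _ _ _
  have d5 : hE i j ≠ vE i j := hE_ne_vE hn1 _ _ _ _
  have d6 : vE i (j-1) ≠ vE i j := fun h => sub_one_ne' hm1 j (vE_inj hm h).2
  rw [Finset.sum_insert (by simp [d1, d2, d3]), Finset.sum_insert (by simp [d4, d5]),
    Finset.sum_insert (by simp [d6]), Finset.sum_singleton] at h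
  linarith

lemma vE_fin2 {n : ℕ} [NeZero n] (i : Fin n) (j j' : Fin 2) :
    vE i j = vE i j' := by
  fin_cases j <;> fin_cases j' <;> first | rfl | (rw [vE, vE]; exact Sym2.eq_swap)

lemma vertex_eq_m2 (hn : 2 < n) {x : Sym2 (Fin n × Fin 2) → ℝ}
    (hx : x ∈ Usub (torusGraph 2 n)) (i : Fin n) (j : Fin 2) :
    x (hE (i-1) j) + x (hE i j) + x (vE i 0) = 0 := by
  classical
  have hn1 : 1 < n := by omega
  have h := vertex_sum_T hx i j
  have e1 : vE i (j-1) = vE i 0 := vE_fin2 i _ _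
  have e2 : vE i j = vE i 0 := vE_fin2 i _ _
  rw [e1, e2] at h
  have d1 : hE (i-1) j ≠ hE i j := fun h => sub_one_ne' hn1 i (hE_inj hn h).1
  have d2 : hE (i-1) j ≠ vE i 0 := hE_ne_vE hn1 _ _ _ _
  have d3 : hE i j ≠ vE i 0 := hE_ne_vE hn1 _ _ _ _
  rw [Finset.pair_eq_singleton] at h
  rw [Finset.sum_insert (by simp [d1, d2]), Finset.sum_insert (by simp [d3]),
    Finset.sum_singleton] at h
  linarith

lemma vertex_eq_m1 (hn : 2 < n) {x : Sym2 (Fin n × Fin 1) → ℝ}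
    (hx : x ∈ Usub (torusGraph 1 n)) (i : Fin n) :
    x (hE (i-1) 0) + x (hE i 0) = 0 := by
  classical
  have hn1 : 1 < n := by omega
  have h := vertex_sum_T hx i (0 : Fin 1)
  have e0 : (0 : Fin 1) - 1 = 0 := rfl
  have hloop : vE i (0 : Fin 1) = s((i,0),(i,0)) := by
    rw [vE]
    congr
  have hxloop : x (vE i (0:Fin 1)) = 0 := by
    apply hx.1
    rw [hloop]
    intro hc
    exact (torusGraph 1 n).loopless.irrefl _ hc
  rw [e0] at h
  have d1 : hE (i-1) (0 : Fin 1) ≠ hE i (0 : Fin 1) := fun h => sub_one_ne' hn1 i (hE_inj hn h).1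
  have d2 : hE (i-1) (0 : Fin 1) ≠ vE i (0 : Fin 1) := hE_ne_vE hn1 _ _ _ _
  have d3 : hE i (0 : Fin 1) ≠ vE i (0 : Fin 1) := hE_ne_vE hn1 _ _ _ _
  rw [Finset.pair_eq_singleton] at h
  rw [Finset.sum_insert (by simp [d1, d2]), Finset.sum_insert (by simp [d3]),
    Finset.sum_singleton] at h
  rw [hxloop] at h
  linarith

end vertexeq

/- ### Recurrence helpers -/
section recur
variable {n : ℕ} [NeZero n]

lemma sign_formula (c : Fin n → ℝ) (h : ∀ i : Fin n, i.val + 1 < n → c (i+1) = - c i) :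
    ∀ i : Fin n, c i = (-1)^(i.val) * c 0 := by
  have key : ∀ k (hk : k < n), c ⟨k, hk⟩ = (-1)^k * c 0 := by
    intro k
    induction k with
    | zero => intro hk; have : (⟨0, hk⟩ : Fin n) = 0 := rfl
              rw [this]; ring
    | succ k ih =>
      intro hk
      have hk' : k < n := by omega
      have hadd : (⟨k, hk'⟩ : Fin n) + 1 = ⟨k+1, hk⟩ := by
        apply Fin.ext
        rw [val_add_one']
        simp only
        split <;> omega
      rw [← hadd, h ⟨k, hk'⟩ (by simpa using hk), ih hk']
      ring
  intro i
  have : i = ⟨i.val, i.isLt⟩ := rfl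
  rw [this, key]

lemma wrap_eq (hn1 : 1 < n) :
    (⟨n-1, by omega⟩ : Fin n) + 1 = 0 := by
  apply Fin.ext
  rw [val_add_one']
  simp only [Fin.val_zero]
  split <;> omega

lemma cyclic_all_zero (hn1 : 1 < n) (c : Fin n → ℝ)
    (h : ∀ i : Fin n, c (i+1) = - c i) (hz : Odd n ∨ c 0 = 0) : ∀ i, c i = 0 := by
  have hs := sign_formula c (fun i _ => h i)
  have hc0 : c 0 = 0 := by
    rcases hz with hodd | hz
    · have hw := h ⟨n-1, by omega⟩
      rw [wrap_eq hn1, hs ⟨n-1, by omega⟩] at hw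
      simp only at hw
      have hpow : ((-1:ℝ))^(n-1) = 1 := by
        apply Even.neg_one_pow
        rcases hodd with ⟨t, ht⟩
        exact ⟨t, by omega⟩
      rw [hpow] at hw
      linarith
    · exact hz
  intro i
  rw [hs i, hc0, mul_zero]

lemma desc_zero (c : Fin n → ℝ)
    (hlast : c ⟨n-1, by have := Nat.pos_of_ne_zero (NeZero.ne n); omega⟩ = 0)
    (hstep : ∀ j : Fin n, j ≠ 0 → c (j - 1) = - c j) : ∀ j, c j = 0 := by
  have key : ∀ k, ∀ j : Fin n, j.val + k = n - 1 → c j = 0 := by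
    intro k
    induction k with
    | zero =>
      intro j hj
      have hpos := Nat.pos_of_ne_zero (NeZero.ne n)
      have hj' : j = ⟨n-1, by omega⟩ := Fin.ext (by simp only; omega)
      rw [hj']
      exact hlast
    | succ k ih =>
      intro j hj
      have hpos := Nat.pos_of_ne_zero (NeZero.ne n)
      have hlt : j.val + 1 < n := by omega
      have hval : (j + 1).val = j.val + 1 := by rw [val_add_one', if_neg (by omega)]
      have hne : j + 1 ≠ 0 := by
        intro hc
        rw [hc] at hval
        simp at hval
      have hj1 : c ((j+1) - 1) = - c (j+1) := hstep (j+1) hne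
      rw [add_one_sub_one'] at hj1
      rw [hj1, ih (j+1) (by omega), neg_zero]
  intro j
  exact key (n - 1 - j.val) j (by have := j.isLt; omega)

end recur

/- ### Part (a) : dim P_T(1,n) = 1 -/
section parta
variable {n : ℕ}

lemma dim_a (hn : 2 < n) (hne : Even n) [NeZero n] :
    Module.finrank ℝ (vectorSpan ℝ (PMset (torusGraph 1 n))) = 1 := by
  classical
  have hn1 : 1 < n := by omega
  have hn2 : 2 ∣ n := hne.two_dvd
  -- lower bound
  have hlow : 1 ≤ Module.finrank ℝ (vectorSpan ℝ (PMset (torusGraph 1 n))) := by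
    set M1 := Hmat (m := 1) hn1 (fun _ => 1) with hM1
    set M0 := Hmat (m := 1) hn1 (fun _ => 0) with hM0
    set d : Sym2 (Fin n × Fin 1) → ℝ :=
      Set.indicator M1.edgeSet 1 - Set.indicator M0.edgeSet 1 with hd
    have hdmem : d ∈ vectorSpan ℝ (PMset (torusGraph 1 n)) :=
      mem_vectorSpan_of_pm (hmat_pm hn1 hn2 _) (hmat_pm hn1 hn2 _)
    have hdne : d ≠ 0 := by
      intro hc
      have := congrFun hc (hE 0 (0 : Fin 1))
      rw [hd] at this
      simp only [Pi.sub_apply, Pi.zero_apply] at this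
      have h1 : hE 0 (0:Fin 1) ∉ M1.edgeSet := by
        rw [hM1]
        intro hc2
        have := (hE_mem_hmat hn1 hn _ 0 0).mp hc2
        simp at this
      have h0 : hE 0 (0:Fin 1) ∈ M0.edgeSet := by
        rw [hM0]
        exact (hE_mem_hmat hn1 hn _ 0 0).mpr (by simp)
      rw [Set.indicator_of_notMem h1, Set.indicator_of_mem h0] at this
      norm_num at this
    have hli : LinearIndependent ℝ (fun _ : Unit => d) := linearIndependent_unique_iff.mpr hdne
    have := lower_bound_dim (G := torusGraph 1 n) (fun _ : Unit => d) (fun _ => hdmem) hli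
    simpa using this
  -- upper bound
  have hup : Module.finrank ℝ (vectorSpan ℝ (PMset (torusGraph 1 n))) ≤ 1 := by
    have := upper_bound_dim (G := torusGraph 1 n)
      (LinearMap.proj (hE 0 (0:Fin 1)) : (Sym2 (Fin n × Fin 1) → ℝ) →ₗ[ℝ] ℝ) ?_
    · simpa using this
    · intro x hx hx0
      simp only [LinearMap.proj_apply] at hx0
      have hc : ∀ i : Fin n, x (hE i (0:Fin 1)) = 0 := by
        apply cyclic_all_zero hn1 (fun i => x (hE i (0:Fin 1)))
        · intro i
          have h := vertex_eq_m1 hn hx (i+1)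
          rw [add_one_sub_one'] at h
          linarith
        · exact Or.inr hx0
      funext e
      by_cases hedge : e ∈ (torusGraph 1 n).edgeSet
      · rcases edge_rep hedge with ⟨i, j, rfl⟩ | ⟨i, j, rfl⟩
        · have : j = 0 := Subsingleton.elim j 0
          rw [this]
          exact hc i
        · exfalso
          have hloop : vE i j = s((i,j),(i,j)) := by
            rw [vE]
            congr
            exact Subsingleton.elim _ _
          rw [hloop] at hedge
          exact (torusGraph 1 n).loopless.irrefl _ hedge
      · exact hx.1 e hedge
  omega

end parta

/- ### Parts (b), (c) : dim P_T(2,n) -/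
section partbc
variable {n : ℕ} [NeZero n]

lemma ind_apply {α : Type*} (s : Set α) (e : α) [Decidable (e ∈ s)] :
    Set.indicator s (1 : α → ℝ) e = if e ∈ s then 1 else 0 := by
  by_cases h : e ∈ s <;> simp [h]

/-- the difference vector of the square-rotation matching at column `i'` (m = 2) -/
noncomputable def dsq2 (hn1 : 1 < n) (i' : Fin n) : Sym2 (Fin n × Fin 2) → ℝ :=
  Set.indicator (Nsq one_lt_two hn1 i' 0).edgeSet 1 -
    Set.indicator (Vmat (n := n) one_lt_two (fun _ => 0)).edgeSet 1

lemma dsq2_mem (hn1 : 1 < n) (i' : Fin n) :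
    dsq2 hn1 i' ∈ vectorSpan ℝ (PMset (torusGraph 2 n)) :=
  mem_vectorSpan_of_pm (nsq_pm _ _ (by norm_num) i' 0) (vmat_pm _ (by norm_num) _)

lemma dsq2_eval (hn : 2 < n) (hn1 : 1 < n) (i' i : Fin n) :
    dsq2 hn1 i' (hE i (1 : Fin 2)) = if i' = i then 1 else 0 := by
  classical
  rw [dsq2, Pi.sub_apply, ind_apply, ind_apply,
    if_neg (hE_not_mem_vmat one_lt_two hn1 _ i 1)]
  rw [sub_zero]
  by_cases h : i = i'
  · rw [if_pos ((hE_mem_nsq one_lt_two hn1 hn i' 0 i 1).mpr ⟨h, Or.inr rfl⟩),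
      if_pos h.symm]
  · rw [if_neg (fun hc => h ((hE_mem_nsq one_lt_two hn1 hn i' 0 i 1).mp hc).1),
      if_neg (fun hc => h hc.symm)]

/-- the row-0 phase-shift difference vector (m = 2, n even) -/
noncomputable def dbeta2 (hn1 : 1 < n) : Sym2 (Fin n × Fin 2) → ℝ :=
  Set.indicator (Hmat (m := 2) hn1 (fun r => if r = 0 then 1 else 0)).edgeSet 1 -
    Set.indicator (Hmat (m := 2) hn1 (fun _ => 0)).edgeSet 1

lemma dbeta2_mem (hn1 : 1 < n) (hn2 : 2 ∣ n) :
    dbeta2 hn1 ∈ vectorSpan ℝ (PMset (torusGraph 2 n)) :=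
  mem_vectorSpan_of_pm (hmat_pm hn1 hn2 _) (hmat_pm hn1 hn2 _)

lemma dbeta2_eval_row1 (hn : 2 < n) (hn1 : 1 < n) (i : Fin n) :
    dbeta2 hn1 (hE i (1 : Fin 2)) = 0 := by
  classical
  rw [dbeta2, Pi.sub_apply, ind_apply, ind_apply]
  have h1 : (if (1 : Fin 2) = 0 then 1 else 0) = (0:ℕ) := by norm_num
  rw [hE_mem_hmat hn1 hn _ i 1, hE_mem_hmat hn1 hn _ i 1, h1]
  ring

lemma dbeta2_eval_00 (hn : 2 < n) (hn1 : 1 < n) :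
    dbeta2 hn1 (hE 0 (0 : Fin 2)) = -1 := by
  classical
  rw [dbeta2, Pi.sub_apply, ind_apply, ind_apply]
  rw [if_neg, if_pos]
  · norm_num
  · rw [hE_mem_hmat hn1 hn _ 0 0]
    simp
  · rw [hE_mem_hmat hn1 hn _ 0 0]
    simp

lemma usub_m2_inj (hn : 2 < n) {x : Sym2 (Fin n × Fin 2) → ℝ}
    (hx : x ∈ Usub (torusGraph 2 n)) (h0 : ∀ i, x (hE i (0:Fin 2)) = 0)
    (h1 : Odd n ∨ x (hE 0 (1:Fin 2)) = 0) : x = 0 := by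
  have hn1 : 1 < n := by omega
  have hw : ∀ i : Fin n, x (vE i (0:Fin 2)) = 0 := by
    intro i
    have h := vertex_eq_m2 hn hx i 0
    rw [h0 i, h0 (i-1)] at h
    linarith
  have hc : ∀ i : Fin n, x (hE i (1:Fin 2)) = 0 := by
    apply cyclic_all_zero hn1 (fun i => x (hE i (1:Fin 2)))
    · intro i
      have h := vertex_eq_m2 hn hx (i+1) 1
      rw [add_one_sub_one', hw (i+1)] at h
      show x (hE (i+1) (1:Fin 2)) = - x (hE i (1:Fin 2))
      linarith
    · exact h1
  funext e
  by_cases hedge : e ∈ (torusGraph 2 n).edgeSet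
  · rcases edge_rep hedge with ⟨i, j, rfl⟩ | ⟨i, j, rfl⟩
    · fin_cases j
      · exact h0 i
      · exact hc i
    · rw [vE_fin2 i j 0]
      exact hw i
  · exact hx.1 e hedge

lemma dim_b (hn : 2 < n) (hne : Even n) :
    Module.finrank ℝ (vectorSpan ℝ (PMset (torusGraph 2 n))) = n + 1 := by
  classical
  have hn1 : 1 < n := by omega
  have hn2 : 2 ∣ n := hne.two_dvd
  have hlow : n + 1 ≤ Module.finrank ℝ (vectorSpan ℝ (PMset (torusGraph 2 n))) := by
    set f : Fin n ⊕ Unit → Sym2 (Fin n × Fin 2) → ℝ :=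
      fun k => Sum.elim (fun i' => dsq2 hn1 i') (fun _ => dbeta2 hn1) k with hf
    have hmem : ∀ k, f k ∈ vectorSpan ℝ (PMset (torusGraph 2 n)) := by
      rintro (i' | u)
      · exact dsq2_mem hn1 i'
      · exact dbeta2_mem hn1 hn2
    have hli : LinearIndependent ℝ f := by
      rw [Fintype.linearIndependent_iff]
      intro g hsum
      have heval : ∀ e, ∑ k : Fin n ⊕ Unit, g k * f k e = 0 := by
        intro e
        have := congrFun hsum e
        rw [Finset.sum_apply] at this
        simpa using this
      have hg1 : ∀ i : Fin n, g (Sum.inl i) = 0 := by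
        intro i
        have h := heval (hE i (1 : Fin 2))
        rw [Fintype.sum_sum_type] at h
        simp only [Sum.elim_inl, Sum.elim_inr, hf] at h
        rw [Fintype.sum_unique
          (fun x : Unit => g (Sum.inr x) * dbeta2 hn1 (hE i (1:Fin 2)))] at h
        rw [dbeta2_eval_row1 hn hn1 i, mul_zero, add_zero] at h
        have : ∀ i' : Fin n, g (Sum.inl i') * dsq2 hn1 i' (hE i (1:Fin 2)) =
            if i' = i then g (Sum.inl i') else 0 := by
          intro i'
          rw [dsq2_eval hn hn1 i' i]
          split <;> ring
        rw [Finset.sum_congr rfl (fun i' _ => this i')] at h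
        rwa [Finset.sum_ite_eq' Finset.univ i (fun i' => g (Sum.inl i')),
          if_pos (Finset.mem_univ i)] at h
      have hg2 : g (Sum.inr ()) = 0 := by
        have h := heval (hE 0 (0 : Fin 2))
        rw [Fintype.sum_sum_type] at h
        simp only [Sum.elim_inl, Sum.elim_inr, hf] at h
        rw [Fintype.sum_unique
          (fun x : Unit => g (Sum.inr x) * dbeta2 hn1 (hE 0 (0:Fin 2)))] at h
        rw [dbeta2_eval_00 hn hn1] at h
        have hz : ∀ i' : Fin n, g (Sum.inl i') * dsq2 hn1 i' (hE 0 (0:Fin 2)) = 0 := by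
          intro i'
          rw [hg1 i', zero_mul]
        rw [Finset.sum_congr rfl (fun i' _ => hz i'), Finset.sum_const_zero, zero_add] at h
        linarith
      rintro (i' | ⟨⟩)
      · exact hg1 i'
      · exact hg2
    have := lower_bound_dim (G := torusGraph 2 n) f hmem hli
    simpa using this
  have hup : Module.finrank ℝ (vectorSpan ℝ (PMset (torusGraph 2 n))) ≤ n + 1 := by
    set φ : (Sym2 (Fin n × Fin 2) → ℝ) →ₗ[ℝ] (Fin n → ℝ) × ℝ :=
      LinearMap.prod (LinearMap.pi (fun i => LinearMap.proj (hE i (0:Fin 2))))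
        (LinearMap.proj (hE 0 (1:Fin 2))) with hφ
    have := upper_bound_dim (G := torusGraph 2 n) φ ?_
    · rw [Module.finrank_prod, Module.finrank_fintype_fun_eq_card, Module.finrank_self,
        Fintype.card_fin] at this
      exact this
    · intro x hx hx0
      rw [hφ] at hx0
      have h0 : ∀ i, x (hE i (0:Fin 2)) = 0 := fun i => congrFun (congrArg Prod.fst hx0) i
      have h1 : x (hE 0 (1:Fin 2)) = 0 := congrArg Prod.snd hx0
      exact usub_m2_inj hn hx h0 (Or.inr h1)
  omega

lemma dim_c (hn : 1 < n) (hno : Odd n) :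
    Module.finrank ℝ (vectorSpan ℝ (PMset (torusGraph 2 n))) = n := by
  classical
  have hn2 : 2 < n := by
    rcases hno with ⟨t, ht⟩
    omega
  have hn1 : 1 < n := hn
  have hlow : n ≤ Module.finrank ℝ (vectorSpan ℝ (PMset (torusGraph 2 n))) := by
    set f : Fin n → Sym2 (Fin n × Fin 2) → ℝ := fun i' => dsq2 hn1 i' with hf
    have hmem : ∀ k, f k ∈ vectorSpan ℝ (PMset (torusGraph 2 n)) :=
      fun i' => dsq2_mem hn1 i'
    have hli : LinearIndependent ℝ f := by
      rw [Fintype.linearIndependent_iff]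
      intro g hsum i
      have h := congrFun hsum (hE i (1 : Fin 2))
      rw [Finset.sum_apply] at h
      simp only [Pi.smul_apply, smul_eq_mul, Pi.zero_apply, hf] at h
      have : ∀ i' : Fin n, g i' * dsq2 hn1 i' (hE i (1:Fin 2)) =
          if i' = i then g i' else 0 := by
        intro i'
        rw [dsq2_eval hn2 hn1 i' i]
        split <;> ring
      rw [Finset.sum_congr rfl (fun i' _ => this i')] at h
      rwa [Finset.sum_ite_eq' Finset.univ i g, if_pos (Finset.mem_univ i)] at h
    have := lower_bound_dim (G := torusGraph 2 n) f hmem hli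
    simpa using this
  have hup : Module.finrank ℝ (vectorSpan ℝ (PMset (torusGraph 2 n))) ≤ n := by
    set φ : (Sym2 (Fin n × Fin 2) → ℝ) →ₗ[ℝ] (Fin n → ℝ) :=
      LinearMap.pi (fun i => LinearMap.proj (hE i (0:Fin 2))) with hφ
    have := upper_bound_dim (G := torusGraph 2 n) φ ?_
    · rw [Module.finrank_fintype_fun_eq_card, Fintype.card_fin] at this
      exact this
    · intro x hx hx0
      rw [hφ] at hx0
      have h0 : ∀ i, x (hE i (0:Fin 2)) = 0 := fun i => congrFun hx0 i
      exact usub_m2_inj hn2 hx h0 (Or.inl hno)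
  omega

end partbc

/- ### Parts (d), (e) : evaluation lemmas -/
section partde
variable {m n : ℕ} [NeZero m] [NeZero n]

noncomputable def dsq (hm1 : 1 < m) (hn1 : 1 < n) (i' : Fin n) (j' : Fin m) :
    Sym2 (Fin n × Fin m) → ℝ :=
  Set.indicator (Nsq hm1 hn1 i' j').edgeSet 1 -
    Set.indicator (Vmat hm1 (fun _ => j'.val)).edgeSet 1

lemma dsq_mem (hm1 : 1 < m) (hn1 : 1 < n) (hm2 : 2 ∣ m) (i' : Fin n) (j' : Fin m) :
    dsq hm1 hn1 i' j' ∈ vectorSpan ℝ (PMset (torusGraph m n)) :=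
  mem_vectorSpan_of_pm (nsq_pm hm1 hn1 hm2 i' j') (vmat_pm hm1 hm2 _)

lemma touch_iff (hm2 : 2 ∣ m) (hn1 : 1 < n) (i' i : Fin n) (j' j : Fin m)
    (hpar : j.val % 2 = j'.val % 2) :
    (inSq i' j' (i,j) ∨ inSq i' j' (i,j+1)) ↔
      ((i' = i ∧ j' = j) ∨ (i' = i - 1 ∧ j' = j)) := by
  constructor
  · rintro (⟨h1, h2⟩ | ⟨h1, h2⟩)
    · dsimp only at h1 h2
      have hj : j = j' := by
        rcases h2 with h2 | h2
        · exact h2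
        · exfalso
          have := parity_flip hm2 j'
          rw [← h2] at this
          omega
      rcases h1 with h1 | h1
      · exact Or.inl ⟨h1.symm, hj.symm⟩
      · refine Or.inr ⟨?_, hj.symm⟩
        rw [h1, add_one_sub_one']
    · dsimp only at h1 h2
      have hj : j = j' := by
        rcases h2 with h2 | h2
        · exfalso
          have hf1 := parity_flip hm2 j
          rw [h2] at hf1
          omega
        · exact add_right_cancel h2
      subst hj
      rcases h1 with h1 | h1
      · exact Or.inl ⟨h1.symm, rfl⟩
      · refine Or.inr ⟨?_, rfl⟩
        rw [h1, add_one_sub_one']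
  · rintro (⟨h1, h2⟩ | ⟨h1, h2⟩)
    · subst h1; subst h2
      exact Or.inl ⟨Or.inl rfl, Or.inl rfl⟩
    · subst h1; subst h2
      exact Or.inl ⟨Or.inr (sub_one_add_one' i).symm, Or.inl rfl⟩

lemma dsq_eval_v (hm1 : 1 < m) (hn1 : 1 < n) (hm : 2 < m) (hm2 : 2 ∣ m)
    (k : Fin n × Fin m) (i : Fin n) (j : Fin m) :
    dsq hm1 hn1 k.1 k.2 (vE i j) =
      (if k = (i,j) then -1 else 0) + (if k = (i-1,j) then -1 else 0) := by
  classical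
  obtain ⟨i', j'⟩ := k
  rw [dsq, Pi.sub_apply, ind_apply, ind_apply, vE_mem_nsq hm1 hn1 hm,
    vE_mem_vmat hm1 hm]
  dsimp only
  by_cases hpar : j.val % 2 = j'.val % 2
  · by_cases htouch : inSq i' j' (i,j) ∨ inSq i' j' (i,j+1)
    · have hor := (touch_iff hm2 hn1 i' i j' j hpar).mp htouch
      rw [if_neg (by tauto), if_pos hpar]
      have hne : ¬((i' = i ∧ j' = j) ∧ (i' = i - 1 ∧ j' = j)) := by
        rintro ⟨⟨ha, -⟩, ⟨hb, -⟩⟩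
        rw [ha] at hb
        exact sub_one_ne' hn1 i hb.symm
      rcases hor with h | h
      · rw [if_pos (show ((i',j') : Fin n × Fin m) = (i,j) by rw [h.1, h.2]),
          if_neg (show ¬((i',j') : Fin n × Fin m) = (i-1,j) by
            intro hc; injection hc with a b; exact hne ⟨h, a, b⟩)]
        norm_num
      · rw [if_neg (show ¬((i',j') : Fin n × Fin m) = (i,j) by
            intro hc; injection hc with a b; exact hne ⟨⟨a, b⟩, h⟩),
          if_pos (show ((i',j') : Fin n × Fin m) = (i-1,j) by rw [h.1, h.2])]
        norm_num
    · push_neg at htouch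
      rw [if_pos ⟨htouch.1, htouch.2, hpar⟩, if_pos hpar]
      have hcontra : ((i' = i ∧ j' = j) ∨ (i' = i-1 ∧ j' = j)) → False := by
        intro hd
        rcases (touch_iff hm2 hn1 i' i j' j hpar).mpr hd with hq | hq
        · exact htouch.1 hq
        · exact htouch.2 hq
      rw [if_neg (show ¬((i',j') : Fin n × Fin m) = (i,j) by
            intro hc; injection hc with a b; exact hcontra (Or.inl ⟨a, b⟩)),
          if_neg (show ¬((i',j') : Fin n × Fin m) = (i-1,j) by
            intro hc; injection hc with a b; exact hcontra (Or.inr ⟨a, b⟩))]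
      norm_num
  · rw [if_neg (fun hc => hpar hc.2.2), if_neg hpar]
    rw [if_neg (show ¬((i',j') : Fin n × Fin m) = (i,j) by
          intro hc; injection hc with a b; rw [b] at hpar; exact hpar rfl),
        if_neg (show ¬((i',j') : Fin n × Fin m) = (i-1,j) by
          intro hc; injection hc with a b; rw [b] at hpar; exact hpar rfl)]
    norm_num

lemma dsq_eval_h (hm1 : 1 < m) (hn1 : 1 < n) (hn : 2 < n)
    (k : Fin n × Fin m) (i : Fin n) (j : Fin m) :
    dsq hm1 hn1 k.1 k.2 (hE i j) =
      (if k = (i,j) then 1 else 0) + (if k = (i,j-1) then 1 else 0) := by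
  classical
  obtain ⟨i', j'⟩ := k
  rw [dsq, Pi.sub_apply, ind_apply, ind_apply, hE_mem_nsq hm1 hn1 hn,
    if_neg (hE_not_mem_vmat hm1 hn1 _ i j), sub_zero]
  dsimp only
  have key : (i = i' ∧ (j = j' ∨ j = j' + 1)) ↔
      ((i',j') = ((i,j) : Fin n × Fin m) ∨ (i',j') = ((i,j-1) : Fin n × Fin m)) := by
    constructor
    · rintro ⟨rfl, (rfl | h2)⟩
      · exact Or.inl rfl
      · right
        rw [Prod.mk.injEq]
        exact ⟨rfl, by rw [h2, add_one_sub_one']⟩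
    · rintro (hc | hc) <;> injection hc with a b
      · exact ⟨a.symm, Or.inl b.symm⟩
      · refine ⟨a.symm, Or.inr ?_⟩
        rw [b, sub_one_add_one']
  by_cases hcond : i = i' ∧ (j = j' ∨ j = j' + 1)
  · rcases key.mp hcond with h | h
    · have hne : ((i',j') : Fin n × Fin m) ≠ (i, j-1) := by
        rw [h]
        intro hc
        injection hc with a b
        exact sub_one_ne' hm1 j b.symm
      rw [if_pos hcond, if_pos h, if_neg hne]
      norm_num
    · have hne : ((i',j') : Fin n × Fin m) ≠ (i, j) := by
        rw [h]
        intro hc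
        injection hc with a b
        exact sub_one_ne' hm1 j b
      rw [if_pos hcond, if_neg hne, if_pos h]
      norm_num
  · have h1 : ((i',j') : Fin n × Fin m) ≠ (i, j) := fun hc => hcond (key.mpr (Or.inl hc))
    have h2 : ((i',j') : Fin n × Fin m) ≠ (i, j-1) := fun hc => hcond (key.mpr (Or.inr hc))
    rw [if_neg hcond, if_neg h1, if_neg h2]
    norm_num

noncomputable def dbeta (hn1 : 1 < n) : Sym2 (Fin n × Fin m) → ℝ :=
  Set.indicator (Hmat (m := m) hn1 (fun r => if r = 0 then 1 else 0)).edgeSet 1 -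
    Set.indicator (Hmat (m := m) hn1 (fun _ => 0)).edgeSet 1

lemma dbeta_mem (hn1 : 1 < n) (hn2 : 2 ∣ n) :
    dbeta (m := m) hn1 ∈ vectorSpan ℝ (PMset (torusGraph m n)) :=
  mem_vectorSpan_of_pm (hmat_pm hn1 hn2 _) (hmat_pm hn1 hn2 _)

lemma dbeta_eval_v (hn1 : 1 < n) (hm1 : 1 < m) (i : Fin n) (j : Fin m) :
    dbeta (m := m) hn1 (vE i j) = 0 := by
  classical
  rw [dbeta, Pi.sub_apply, ind_apply, ind_apply,
    if_neg (vE_not_mem_hmat hn1 hm1 _ i j), if_neg (vE_not_mem_hmat hn1 hm1 _ i j)]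
  ring

lemma dbeta_eval_h (hn1 : 1 < n) (hn : 2 < n) (i : Fin n) (j : Fin m) :
    dbeta (m := m) hn1 (hE i j) =
      if j = 0 then (if i.val % 2 = 0 then -1 else 1) else 0 := by
  classical
  rw [dbeta, Pi.sub_apply, ind_apply, ind_apply, hE_mem_hmat hn1 hn _ i j,
    hE_mem_hmat hn1 hn _ i j]
  by_cases hj : j = 0
  · rw [if_pos hj, if_pos hj]
    by_cases hi : i.val % 2 = 0
    · rw [if_pos hi, if_neg (by omega), if_pos hi]
      norm_num
    · rw [if_neg hi, if_pos (by omega), if_neg hi]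
      norm_num
  · rw [if_neg hj, if_neg hj]
    ring

noncomputable def dgamma (hm1 : 1 < m) : Sym2 (Fin n × Fin m) → ℝ :=
  Set.indicator (Vmat (n := n) hm1 (fun i => if i = 0 then 1 else 0)).edgeSet 1 -
    Set.indicator (Vmat (n := n) hm1 (fun _ => 0)).edgeSet 1

lemma dgamma_mem (hm1 : 1 < m) (hm2 : 2 ∣ m) :
    dgamma (n := n) hm1 ∈ vectorSpan ℝ (PMset (torusGraph m n)) :=
  mem_vectorSpan_of_pm (vmat_pm hm1 hm2 _) (vmat_pm hm1 hm2 _)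

lemma dgamma_eval_h (hm1 : 1 < m) (hn1 : 1 < n) (i : Fin n) (j : Fin m) :
    dgamma (n := n) hm1 (hE i j) = 0 := by
  classical
  rw [dgamma, Pi.sub_apply, ind_apply, ind_apply,
    if_neg (hE_not_mem_vmat hm1 hn1 _ i j), if_neg (hE_not_mem_vmat hm1 hn1 _ i j)]
  ring

lemma dgamma_eval_v (hm1 : 1 < m) (hm : 2 < m) (i : Fin n) (j : Fin m) :
    dgamma (n := n) hm1 (vE i j) =
      if i = 0 then (if j.val % 2 = 0 then -1 else 1) else 0 := by
  classical
  rw [dgamma, Pi.sub_apply, ind_apply, ind_apply, vE_mem_vmat hm1 hm,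
    vE_mem_vmat hm1 hm]
  by_cases hi : i = 0
  · rw [if_pos hi, if_pos hi]
    by_cases hj : j.val % 2 = 0
    · rw [if_pos hj, if_neg (by omega), if_pos hj]
      norm_num
    · rw [if_neg hj, if_pos (by omega), if_neg hj]
      norm_num
  · rw [if_neg hi, if_neg hi]
    ring

end partde

/- ### Parts (d), (e) : dimension computations -/
section partde2
variable {m n : ℕ} [NeZero m] [NeZero n]

lemma usub_gen_inj (hm : 2 < m) (hn : 2 < n) {x : Sym2 (Fin n × Fin m) → ℝ}
    (hx : x ∈ Usub (torusGraph m n))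
    (hv : ∀ i : Fin n, x (vE i ⟨m-1, by omega⟩) = 0)
    (hh : ∀ (i : Fin n) (j : Fin m), j ≠ 0 → x (hE i j) = 0)
    (hlast : Odd n ∨ x (hE ⟨n-1, by omega⟩ (0 : Fin m)) = 0) : x = 0 := by
  have hm1 : 1 < m := by omega
  have hn1 : 1 < n := by omega
  have hvall : ∀ (i : Fin n) (j : Fin m), x (vE i j) = 0 := by
    intro i
    apply desc_zero (fun j => x (vE i j))
    · exact hv i
    · intro j hj
      have h := vertex_eq_gen hm hn hx i j
      rw [hh (i-1) j hj, hh i j hj] at h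
      show x (vE i (j-1)) = - x (vE i j)
      linarith
  have hrec : ∀ i : Fin n, x (hE (i+1) (0:Fin m)) = - x (hE i (0:Fin m)) := by
    intro i
    have h := vertex_eq_gen hm hn hx (i+1) 0
    rw [add_one_sub_one', hvall (i+1) (0-1), hvall (i+1) 0] at h
    linarith
  have hc0 : ∀ i : Fin n, x (hE i (0:Fin m)) = 0 := by
    apply cyclic_all_zero hn1 (fun i => x (hE i (0:Fin m))) hrec
    rcases hlast with hodd | hz
    · exact Or.inl hodd
    · right
      have hs := sign_formula (fun i => x (hE i (0:Fin m))) (fun i _ => hrec i) ⟨n-1, by omega⟩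
      dsimp only at hs
      rw [hz] at hs
      have hp : ((-1:ℝ))^((⟨n-1, by omega⟩ : Fin n) : ℕ) ≠ 0 := pow_ne_zero _ (by norm_num)
      show x (hE 0 (0:Fin m)) = 0
      rcases mul_eq_zero.mp hs.symm with h | h
      · exact absurd h hp
      · exact h
  funext e
  by_cases hedge : e ∈ (torusGraph m n).edgeSet
  · rcases edge_rep hedge with ⟨i, j, rfl⟩ | ⟨i, j, rfl⟩
    · by_cases hj : j = 0
      · rw [hj]; exact hc0 i
      · exact hh i j hj
    · exact hvall i j
  · exact hx.1 e hedge

lemma dim_e (hm : 2 < m) (hme : Even m) (hn1' : 1 < n) (hno : Odd n) :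
    Module.finrank ℝ (vectorSpan ℝ (PMset (torusGraph m n))) = m * n := by
  classical
  have hn : 2 < n := by rcases hno with ⟨t, ht⟩; omega
  have hm1 : 1 < m := by omega
  have hn1 : 1 < n := by omega
  have hm2 : 2 ∣ m := hme.two_dvd
  have hlow : m * n ≤ Module.finrank ℝ (vectorSpan ℝ (PMset (torusGraph m n))) := by
    set f : Fin n × Fin m → Sym2 (Fin n × Fin m) → ℝ :=
      fun k => dsq hm1 hn1 k.1 k.2 with hf
    have hmem : ∀ k, f k ∈ vectorSpan ℝ (PMset (torusGraph m n)) :=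
      fun k => dsq_mem hm1 hn1 hm2 k.1 k.2
    have hli : LinearIndependent ℝ f := by
      rw [Fintype.linearIndependent_iff]
      intro g hsum
      have heval : ∀ e, ∑ k : Fin n × Fin m, g k * f k e = 0 := by
        intro e
        have := congrFun hsum e
        rw [Finset.sum_apply] at this
        simpa using this
      have hrecj : ∀ (i : Fin n) (j : Fin m), g (i,j) + g (i-1,j) = 0 := by
        intro i j
        have h := heval (vE i j)
        have hterm : ∀ k : Fin n × Fin m, g k * f k (vE i j) =
            (if k = (i,j) then -(g k) else 0) + (if k = (i-1,j) then -(g k) else 0) := by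
          intro k
          show g k * dsq hm1 hn1 k.1 k.2 (vE i j) = _
          rw [dsq_eval_v hm1 hn1 hm hm2 k i j]
          split <;> split <;> ring
        rw [Finset.sum_congr rfl (fun k _ => hterm k), Finset.sum_add_distrib,
          Finset.sum_ite_eq' Finset.univ ((i,j) : Fin n × Fin m) (fun k => -(g k)),
          Finset.sum_ite_eq' Finset.univ ((i-1,j) : Fin n × Fin m) (fun k => -(g k)),
          if_pos (Finset.mem_univ _), if_pos (Finset.mem_univ _)] at h
        linarith
      rintro ⟨i, j⟩
      have := cyclic_all_zero hn1 (fun i => g (i,j)) ?_ (Or.inl hno) i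
      · exact this
      · intro i'
        have h := hrecj (i'+1) j
        rw [add_one_sub_one'] at h
        show g (i'+1, j) = - g (i', j)
        linarith
    have := lower_bound_dim (G := torusGraph m n) f hmem hli
    rw [Fintype.card_prod, Fintype.card_fin, Fintype.card_fin] at this
    calc m * n = n * m := Nat.mul_comm m n
    _ ≤ _ := this
  have hup : Module.finrank ℝ (vectorSpan ℝ (PMset (torusGraph m n))) ≤ m * n := by
    set φ : (Sym2 (Fin n × Fin m) → ℝ) →ₗ[ℝ] (Fin n × Fin m → ℝ) :=
      LinearMap.pi (fun p : Fin n × Fin m =>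
        if p.2 = 0 then LinearMap.proj (vE p.1 ⟨m-1, by omega⟩)
        else LinearMap.proj (hE p.1 p.2)) with hφ
    have := upper_bound_dim (G := torusGraph m n) φ ?_
    · rw [Module.finrank_fintype_fun_eq_card, Fintype.card_prod, Fintype.card_fin,
        Fintype.card_fin] at this
      calc Module.finrank ℝ (vectorSpan ℝ (PMset (torusGraph m n))) ≤ n * m := this
      _ = m * n := Nat.mul_comm n m
    · intro x hx hx0
      rw [hφ] at hx0
      have hcomp : ∀ p : Fin n × Fin m,
          (if p.2 = 0 then x (vE p.1 ⟨m-1, by omega⟩) else x (hE p.1 p.2)) = 0 := by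
        intro p
        have := congrFun hx0 p
        rw [LinearMap.pi_apply] at this
        by_cases hp : p.2 = 0
        · rw [if_pos hp]
          rw [if_pos hp] at this
          exact this
        · rw [if_neg hp]
          rw [if_neg hp] at this
          exact this
      apply usub_gen_inj hm hn hx
      · intro i
        have := hcomp (i, 0)
        rw [if_pos rfl] at this
        exact this
      · intro i j hj
        have := hcomp (i, j)
        rw [if_neg hj] at this
        exact this
      · exact Or.inl hno
  omega

end partde2

section partd
variable {m n : ℕ} [NeZero m] [NeZero n]

lemma add_one_ne_zero' (i : Fin n) (h : i.val + 1 < n) : i + 1 ≠ 0 := by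
  intro hc
  have h2 := congrArg Fin.val hc
  rw [val_add_one', if_neg (by omega), Fin.val_zero] at h2
  exact absurd h2 (by omega)

lemma dim_d (hm : 2 < m) (hn : 2 < n) (hme : Even m) (hne : Even n) :
    Module.finrank ℝ (vectorSpan ℝ (PMset (torusGraph m n))) = m * n + 1 := by
  classical
  have hm1 : 1 < m := by omega
  have hn1 : 1 < n := by omega
  have hm2 : 2 ∣ m := hme.two_dvd
  have hn2 : 2 ∣ n := hne.two_dvd
  have hlow : m * n + 1 ≤ Module.finrank ℝ (vectorSpan ℝ (PMset (torusGraph m n))) := by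
    set f : ((Fin n × Fin m) ⊕ Unit) → Sym2 (Fin n × Fin m) → ℝ :=
      fun k => Sum.elim
        (fun p : Fin n × Fin m => if p = ((0 : Fin n), (0 : Fin m)) then dgamma (n := n) hm1
          else dsq hm1 hn1 p.1 p.2)
        (fun _ => dbeta (m := m) hn1) k with hf
    have hmem : ∀ k, f k ∈ vectorSpan ℝ (PMset (torusGraph m n)) := by
      rintro (p | u)
      · show (if p = ((0 : Fin n), (0 : Fin m)) then dgamma (n := n) hm1
          else dsq hm1 hn1 p.1 p.2) ∈ _
        split
        · exact dgamma_mem hm1 hm2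
        · exact dsq_mem hm1 hn1 hm2 p.1 p.2
      · exact dbeta_mem hn1 hn2
    have hli : LinearIndependent ℝ f := by
      rw [Fintype.linearIndependent_iff]
      intro g hsum
      have heval : ∀ e, ∑ k : (Fin n × Fin m) ⊕ Unit, g k * f k e = 0 := by
        intro e
        have := congrFun hsum e
        rw [Finset.sum_apply] at this
        simpa using this
      set a : Fin n × Fin m → ℝ :=
        fun p => if p = ((0:Fin n),(0:Fin m)) then 0 else g (Sum.inl p) with ha
      set γ : ℝ := g (Sum.inl ((0:Fin n),(0:Fin m))) with hγ
      set β : ℝ := g (Sum.inr ()) with hβ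
      have master : ∀ e, ∑ p : Fin n × Fin m, a p * dsq hm1 hn1 p.1 p.2 e
          + γ * dgamma (n := n) hm1 e + β * dbeta (m := m) hn1 e = 0 := by
        intro e
        have h := heval e
        rw [Fintype.sum_sum_type,
          Fintype.sum_unique (fun u : Unit => g (Sum.inr u) * f (Sum.inr u) e)] at h
        have hsplit : ∀ p : Fin n × Fin m, g (Sum.inl p) * f (Sum.inl p) e
            = a p * dsq hm1 hn1 p.1 p.2 e
              + (if p = ((0:Fin n),(0:Fin m)) then γ * dgamma (n := n) hm1 e else 0) := by
          intro p
          show g (Sum.inl p) * (if p = ((0 : Fin n), (0 : Fin m)) then dgamma (n := n) hm1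
            else dsq hm1 hn1 p.1 p.2) e = _
          by_cases hp : p = ((0:Fin n),(0:Fin m))
          · rw [if_pos hp, if_pos hp, ha]
            dsimp only
            rw [if_pos hp, hγ, hp]
            ring
          · rw [if_neg hp, if_neg hp, ha]
            dsimp only
            rw [if_neg hp]
            ring
        rw [Finset.sum_congr rfl (fun p _ => hsplit p), Finset.sum_add_distrib,
          Finset.sum_ite_eq' Finset.univ ((0,0) : Fin n × Fin m)
            (fun _ => γ * dgamma (n := n) hm1 e),
          if_pos (Finset.mem_univ _)] at h
        have hd : g (Sum.inr default) * f (Sum.inr default) e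
            = β * dbeta (m := m) hn1 e := rfl
        rw [hd] at h
        show _ = (0:ℝ)
        linarith
      have eqV : ∀ (i : Fin n) (j : Fin m), a (i,j) + a (i-1,j) =
          γ * (if i = 0 then (if j.val % 2 = 0 then -1 else 1) else 0) := by
        intro i j
        have h := master (vE i j)
        have hterm : ∀ p : Fin n × Fin m, a p * dsq hm1 hn1 p.1 p.2 (vE i j) =
            (if p = (i,j) then -(a p) else 0) + (if p = (i-1,j) then -(a p) else 0) := by
          intro p
          rw [dsq_eval_v hm1 hn1 hm hm2 p i j]
          split <;> split <;> ring
        rw [Finset.sum_congr rfl (fun p _ => hterm p), Finset.sum_add_distrib,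
          Finset.sum_ite_eq' Finset.univ ((i,j) : Fin n × Fin m) (fun p => -(a p)),
          Finset.sum_ite_eq' Finset.univ ((i-1,j) : Fin n × Fin m) (fun p => -(a p)),
          if_pos (Finset.mem_univ _), if_pos (Finset.mem_univ _),
          dgamma_eval_v hm1 hm i j, dbeta_eval_v hn1 hm1 i j] at h
        linarith
      have eqH : ∀ (i : Fin n) (j : Fin m), a (i,j) + a (i,j-1) =
          - (β * (if j = 0 then (if i.val % 2 = 0 then -1 else 1) else 0)) := by
        intro i j
        have h := master (hE i j)
        have hterm : ∀ p : Fin n × Fin m, a p * dsq hm1 hn1 p.1 p.2 (hE i j) =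
            (if p = (i,j) then a p else 0) + (if p = (i,j-1) then a p else 0) := by
          intro p
          rw [dsq_eval_h hm1 hn1 hn p i j]
          split <;> split <;> ring
        rw [Finset.sum_congr rfl (fun p _ => hterm p), Finset.sum_add_distrib,
          Finset.sum_ite_eq' Finset.univ ((i,j) : Fin n × Fin m) (fun p => a p),
          Finset.sum_ite_eq' Finset.univ ((i,j-1) : Fin n × Fin m) (fun p => a p),
          if_pos (Finset.mem_univ _), if_pos (Finset.mem_univ _),
          dgamma_eval_h hm1 hn1 i j, dbeta_eval_h hn1 hn i j] at h
        linarith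
      have ha00 : a ((0:Fin n),(0:Fin m)) = 0 := by
        rw [ha]
        dsimp only
        rw [if_pos rfl]
      have hcol0 : ∀ i : Fin n, a (i, (0:Fin m)) = 0 := by
        have hrec : ∀ i : Fin n, i.val + 1 < n →
            a (i+1, (0:Fin m)) = - a (i, (0:Fin m)) := by
          intro i hi
          have h := eqV (i+1) 0
          rw [add_one_sub_one', if_neg (add_one_ne_zero' i hi), mul_zero] at h
          linarith
        have hs := sign_formula (fun i => a (i, (0:Fin m))) hrec
        intro i
        have := hs i
        rw [this, ha00, mul_zero]
      have hγ0 : γ = 0 := by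
        have h := eqV 0 0
        rw [hcol0 0, hcol0 (0-1), if_pos rfl,
          if_pos (show ((0:Fin m)).val % 2 = 0 by rw [Fin.val_zero])] at h
        linarith
      have hrow0 : ∀ j : Fin m, a ((0:Fin n), j) = 0 := by
        have hrec : ∀ j : Fin m, j.val + 1 < m →
            a ((0:Fin n), j+1) = - a ((0:Fin n), j) := by
          intro j hj
          have h := eqH 0 (j+1)
          rw [add_one_sub_one', if_neg (add_one_ne_zero' j hj), mul_zero, neg_zero] at h
          linarith
        have hs := sign_formula (fun j => a ((0:Fin n), j)) hrec
        intro j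
        have := hs j
        rw [this, ha00, mul_zero]
      have hβ0 : β = 0 := by
        have h := eqH 0 0
        rw [hrow0 0, hrow0 (0-1), if_pos rfl,
          if_pos (show ((0:Fin n)).val % 2 = 0 by rw [Fin.val_zero])] at h
        linarith
      have hall : ∀ p : Fin n × Fin m, a p = 0 := by
        rintro ⟨i, j⟩
        refine cyclic_all_zero hn1 (fun i => a (i, j)) ?_ (Or.inr (hrow0 j)) i
        intro i'
        have h := eqV (i'+1) j
        rw [add_one_sub_one', hγ0, zero_mul] at h
        show a (i'+1, j) = - a (i', j)
        linarith
      rintro (p | u)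
      · by_cases hp : p = ((0:Fin n),(0:Fin m))
        · rw [hp, ← hγ]
          exact hγ0
        · have h := hall p
          rw [ha] at h
          dsimp only at h
          rw [if_neg hp] at h
          exact h
      · cases u
        rw [← hβ]
        exact hβ0
    have := lower_bound_dim (G := torusGraph m n) f hmem hli
    rw [Fintype.card_sum, Fintype.card_prod, Fintype.card_fin, Fintype.card_fin,
      Fintype.card_unit] at this
    calc m * n + 1 = n * m + 1 := by rw [Nat.mul_comm]
    _ ≤ _ := this
  have hup : Module.finrank ℝ (vectorSpan ℝ (PMset (torusGraph m n))) ≤ m * n + 1 := by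
    set ψ : (Sym2 (Fin n × Fin m) → ℝ) →ₗ[ℝ] (Fin n × Fin m → ℝ) :=
      LinearMap.pi (fun p : Fin n × Fin m =>
        if p.2 = 0 then LinearMap.proj (vE p.1 ⟨m-1, by omega⟩)
        else LinearMap.proj (hE p.1 p.2)) with hψ
    set φ : (Sym2 (Fin n × Fin m) → ℝ) →ₗ[ℝ] (Fin n × Fin m → ℝ) × ℝ :=
      LinearMap.prod ψ (LinearMap.proj (hE ⟨n-1, by omega⟩ (0:Fin m))) with hφ
    have := upper_bound_dim (G := torusGraph m n) φ ?_
    · rw [Module.finrank_prod, Module.finrank_fintype_fun_eq_card, Module.finrank_self,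
        Fintype.card_prod, Fintype.card_fin, Fintype.card_fin] at this
      calc Module.finrank ℝ (vectorSpan ℝ (PMset (torusGraph m n))) ≤ n * m + 1 := this
      _ = m * n + 1 := by rw [Nat.mul_comm]
    · intro x hx hx0
      rw [hφ, LinearMap.prod_apply] at hx0
      have hx1 : ψ x = 0 := congrArg Prod.fst hx0
      rw [hψ] at hx1
      have h1 : ∀ p : Fin n × Fin m,
          (if p.2 = 0 then x (vE p.1 ⟨m-1, by omega⟩) else x (hE p.1 p.2)) = 0 := by
        intro p
        have h' := congrFun hx1 p
        rw [LinearMap.pi_apply] at h'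
        by_cases hp : p.2 = 0
        · rw [if_pos hp]
          rw [if_pos hp] at h'
          exact h'
        · rw [if_neg hp]
          rw [if_neg hp] at h'
          exact h'
      have h2 : x (hE ⟨n-1, by omega⟩ (0:Fin m)) = 0 := congrArg Prod.snd hx0
      apply usub_gen_inj hm hn hx
      · intro i
        have := h1 (i, 0)
        rw [if_pos rfl] at this
        exact this
      · intro i j hj
        have := h1 (i, j)
        rw [if_neg hj] at this
        exact this
      · exact Or.inr h2
  omega

end partd


/-- Dimensions of the perfect matching polytopes of torus graphs. -/
theorem pm_polytope_torus_dim :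
    (∀ n : ℕ, 2 < n → Even n → polytopeDim (pmPolytope (torusGraph 1 n)) = 1) ∧
    (∀ n : ℕ, 2 < n → Even n → polytopeDim (pmPolytope (torusGraph 2 n)) = n + 1) ∧
    (∀ n : ℕ, 1 < n → Odd n → polytopeDim (pmPolytope (torusGraph 2 n)) = n) ∧
    (∀ m n : ℕ, 2 < m → 2 < n → Even m → Even n →
      polytopeDim (pmPolytope (torusGraph m n)) = m * n + 1) ∧
    (∀ m n : ℕ, 2 < m → Even m → 1 < n → Odd n →
      polytopeDim (pmPolytope (torusGraph m n)) = m * n) := by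
  refine ⟨?_, ?_, ?_, ?_, ?_⟩
  · intro n hn hne
    haveI : NeZero n := ⟨by omega⟩
    show Module.finrank ℝ (vectorSpan ℝ (pmPolytope (torusGraph 1 n))) = 1
    rw [vectorSpan_pm]
    exact dim_a hn hne
  · intro n hn hne
    haveI : NeZero n := ⟨by omega⟩
    show Module.finrank ℝ (vectorSpan ℝ (pmPolytope (torusGraph 2 n))) = n + 1
    rw [vectorSpan_pm]
    exact dim_b hn hne
  · intro n hn hno
    haveI : NeZero n := ⟨by omega⟩
    show Module.finrank ℝ (vectorSpan ℝ (pmPolytope (torusGraph 2 n))) = n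
    rw [vectorSpan_pm]
    exact dim_c hn hno
  · intro m n hm hn hme hne
    haveI : NeZero m := ⟨by omega⟩
    haveI : NeZero n := ⟨by omega⟩
    show Module.finrank ℝ (vectorSpan ℝ (pmPolytope (torusGraph m n))) = m * n + 1
    rw [vectorSpan_pm]
    exact dim_d hm hn hme hne
  · intro m n hm hme hn hno
    haveI : NeZero m := ⟨by omega⟩
    haveI : NeZero n := ⟨by omega⟩
    show Module.finrank ℝ (vectorSpan ℝ (pmPolytope (torusGraph m n))) = m * n
    rw [vectorSpan_pm]
    exact dim_e hm hme hn hno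
end

section
/- Let n ≥ 4 be even. Then the dilate tP(3,n) of the perfect matching polytope P(3,n) of the grid graph G(3,n) contains no lattice point in its relative interior for t = 1, 2, 3, 4, and the dilate 5P(3,n) contains exactly one lattice point in its relative interior. -/
open Finset Pointwise

namespace GridAux

abbrev GV (n : ℕ) := Fin n × Fin 3

variable {n : ℕ}

lemma grid_adj_iff (p q : GV n) :
    (gridGraph 3 n).Adj p q ↔
      (p.2 = q.2 ∧ (p.1.val + 1 = q.1.val ∨ q.1.val + 1 = p.1.val)) ∨
      (p.1 = q.1 ∧ (p.2.val + 1 = q.2.val ∨ q.2.val + 1 = p.2.val)) := by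
  show Nat.dist p.1.val q.1.val + Nat.dist p.2.val q.2.val = 1 ↔ _
  simp only [Nat.dist, Fin.ext_iff]
  omega

lemma grid_adj_parity {p q : GV n} (h : (gridGraph 3 n).Adj p q) :
    (p.1.val + p.2.val) % 2 ≠ (q.1.val + q.2.val) % 2 := by
  rw [grid_adj_iff] at h
  simp only [Fin.ext_iff] at h
  omega

lemma sum_incident_eq {M : Type*} [AddCommMonoid M] (x : Sym2 (GV n) → M) (v : GV n) :
    ∑ e ∈ Finset.univ.filter (fun e : Sym2 (GV n) => v ∈ e), x e = ∑ u : GV n, x s(v, u) := by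
  have himg : (Finset.univ.image (fun u : GV n => s(v, u)))
      = Finset.univ.filter (fun e : Sym2 (GV n) => v ∈ e) := by
    ext e
    simp only [Finset.mem_image, Finset.mem_filter, Finset.mem_univ, true_and]
    constructor
    · rintro ⟨u, _, rfl⟩; exact Sym2.mem_mk_left v u
    · intro he
      exact ⟨Sym2.Mem.other he, Sym2.other_spec he⟩
  rw [← himg, Finset.sum_image]
  intro a _ b _ h
  exact (Sym2.congr_right).1 h

def gQ (n : ℕ) (t : ℝ) : Set (Sym2 (GV n) → ℝ) :=
  {x | (∀ e ∉ (gridGraph 3 n).edgeSet, x e = 0) ∧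
       (∀ v : GV n, ∑ e ∈ Finset.univ.filter (fun e : Sym2 (GV n) => v ∈ e), x e = t) ∧
       (∀ e, 0 ≤ x e)}

/-- black vertices -/
abbrev Bk (n : ℕ) := {p : GV n // (p.1.val + p.2.val) % 2 = 0}

def gmap (hn : 0 < n) (b : GV n) : GV n :=
  (⟨(b.1.val + 1) % n, Nat.mod_lt _ hn⟩, b.2)

lemma gmap_parity (hn : 0 < n) (hev : Even n) (b : GV n) :
    ((gmap hn b).1.val + (gmap hn b).2.val) % 2 = (b.1.val + b.2.val + 1) % 2 := by
  obtain ⟨k, hk⟩ := hev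
  show ((b.1.val + 1) % n + b.2.val) % 2 = _
  have hb := b.1.isLt
  rcases Nat.lt_or_ge (b.1.val + 1) n with h | h
  · rw [Nat.mod_eq_of_lt h]; omega
  · have h2 : b.1.val + 1 = n := by omega
    rw [h2, Nat.mod_self]
    omega

lemma succ_mod_inj (hn : 0 < n) {a b : ℕ} (ha : a < n) (hb : b < n)
    (h : (a + 1) % n = (b + 1) % n) : a = b := by
  rcases Nat.lt_or_ge (a + 1) n with ha' | ha' <;> rcases Nat.lt_or_ge (b + 1) n with hb' | hb'
  · rw [Nat.mod_eq_of_lt ha', Nat.mod_eq_of_lt hb'] at h; omega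
  · have : b + 1 = n := by omega
    rw [Nat.mod_eq_of_lt ha', this, Nat.mod_self] at h; omega
  · have : a + 1 = n := by omega
    rw [this, Nat.mod_self, Nat.mod_eq_of_lt hb'] at h; omega
  · omega

lemma gmap_inj (hn : 0 < n) {b c : GV n} (h : gmap hn b = gmap hn c) : b = c := by
  have h1 : ((b.1.val + 1) % n) = ((c.1.val + 1) % n) :=
    congrArg (fun p : GV n => p.1.val) h
  have h2 : (gmap hn b).2 = (gmap hn c).2 := congrArg (fun p : GV n => p.2) h
  have h3 : b.1.val = c.1.val := succ_mod_inj hn b.1.isLt c.1.isLt h1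
  exact Prod.ext (Fin.ext h3) h2

lemma gmap_surj_white (hn : 0 < n) (hev : Even n) (u : GV n)
    (hu : (u.1.val + u.2.val) % 2 = 1) : ∃ b : Bk n, gmap hn b.1 = u := by
  obtain ⟨k, hk⟩ := hev
  have hu1 := u.1.isLt
  rcases Nat.eq_zero_or_pos u.1.val with h0 | h0
  · refine ⟨⟨(⟨n - 1, by omega⟩, u.2), by simp; omega⟩, ?_⟩
    refine Prod.ext (Fin.ext ?_) rfl
    show (n - 1 + 1) % n = u.1.val
    rw [show n - 1 + 1 = n by omega, Nat.mod_self]; omega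
  · refine ⟨⟨(⟨u.1.val - 1, by omega⟩, u.2), by simp; omega⟩, ?_⟩
    refine Prod.ext (Fin.ext ?_) rfl
    show (u.1.val - 1 + 1) % n = u.1.val
    rw [show u.1.val - 1 + 1 = u.1.val by omega, Nat.mod_eq_of_lt hu1]



lemma gmap_white (hn : 0 < n) (hev : Even n) (b : Bk n) :
    ((gmap hn b.1).1.val + (gmap hn b.1).2.val) % 2 = 1 := by
  have h1 := gmap_parity hn hev b.1
  have h2 := b.2
  omega

def permEdges (hn : 0 < n) (σ : Equiv.Perm (Bk n)) : Set (Sym2 (GV n)) :=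
  {e | ∃ b : Bk n, e = s(b.1, gmap hn (σ b).1)}

noncomputable def permVec (hn : 0 < n) (σ : Equiv.Perm (Bk n)) : Sym2 (GV n) → ℝ :=
  Set.indicator (permEdges hn σ) 1

def permSub (hn : 0 < n) (σ : Equiv.Perm (Bk n))
    (hadjσ : ∀ b : Bk n, (gridGraph 3 n).Adj b.1 (gmap hn (σ b).1)) :
    (gridGraph 3 n).Subgraph where
  verts := Set.univ
  Adj p q := (∃ b : Bk n, p = b.1 ∧ q = gmap hn (σ b).1) ∨
    (∃ b : Bk n, q = b.1 ∧ p = gmap hn (σ b).1)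
  adj_sub := by
    rintro p q (⟨b, rfl, rfl⟩ | ⟨b, rfl, rfl⟩)
    · exact hadjσ b
    · exact (hadjσ b).symm
  edge_vert := fun _ => Set.mem_univ _
  symm := ⟨fun p q h => Or.symm h⟩

lemma permSub_edgeSet (hn : 0 < n) (σ : Equiv.Perm (Bk n))
    (hadjσ : ∀ b : Bk n, (gridGraph 3 n).Adj b.1 (gmap hn (σ b).1)) :
    (permSub hn σ hadjσ).edgeSet = permEdges hn σ := by
  ext e
  induction e using Sym2.ind with
  | _ p q =>
    rw [SimpleGraph.Subgraph.mem_edgeSet]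
    show _ ↔ (∃ b : Bk n, s(p,q) = s(b.1, gmap hn (σ b).1))
    constructor
    · rintro (⟨b, h1, h2⟩ | ⟨b, h1, h2⟩)
      · exact ⟨b, by rw [Sym2.eq_iff]; exact Or.inl ⟨h1, h2⟩⟩
      · exact ⟨b, by rw [Sym2.eq_iff]; exact Or.inr ⟨h2, h1⟩⟩
    · rintro ⟨b, hb⟩
      rw [Sym2.eq_iff] at hb
      rcases hb with ⟨h1, h2⟩ | ⟨h1, h2⟩
      · exact Or.inl ⟨b, h1, h2⟩
      · exact Or.inr ⟨b, h2, h1⟩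

lemma gmap_inj' (hn : 0 < n) {b c : Bk n} (h : gmap hn b.1 = gmap hn c.1) : b = c :=
  Subtype.ext (gmap_inj hn h)

lemma permSub_isPM (hn : 0 < n) (hev : Even n) (σ : Equiv.Perm (Bk n))
    (hadjσ : ∀ b : Bk n, (gridGraph 3 n).Adj b.1 (gmap hn (σ b).1)) :
    (permSub hn σ hadjσ).IsPerfectMatching := by
  constructor
  · rintro v -
    rcases Nat.mod_two_eq_zero_or_one (v.1.val + v.2.val) with hb | hw
    · refine ⟨gmap hn (σ ⟨v, hb⟩).1, Or.inl ⟨⟨v, hb⟩, rfl, rfl⟩, ?_⟩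
      rintro y (⟨b', hb1, hb2⟩ | ⟨b', hb1, hb2⟩)
      · have hbb : b' = ⟨v, hb⟩ := Subtype.ext hb1.symm
        rw [hb2, hbb]
      · exfalso
        have := gmap_white hn hev (σ b')
        rw [← hb2] at this
        omega
    · obtain ⟨c, hc⟩ := gmap_surj_white hn hev v hw
      refine ⟨(σ.symm c).1, Or.inr ⟨σ.symm c, rfl, ?_⟩, ?_⟩
      · rw [Equiv.apply_symm_apply, hc]
      · rintro y (⟨b', hb1, hb2⟩ | ⟨b', hb1, hb2⟩)
        · exfalso
          have := b'.2
          rw [← hb1] at this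
          omega
        · have h1 : gmap hn (σ b').1 = gmap hn c.1 := by rw [← hb2, hc]
          have hσb : σ b' = c := gmap_inj' hn h1
          have : b' = σ.symm c := by rw [← hσb, Equiv.symm_apply_apply]
          rw [hb1, this]
  · exact fun v => Set.mem_univ _

set_option maxHeartbeats 2000000 in
lemma gQ_subset_pm (hn : 0 < n) (hev : Even n) : gQ n 1 ⊆ pmPolytope (gridGraph 3 n) := by
  classical
  intro x hx
  obtain ⟨hz, hs, hnn⟩ := hx
  have hvsum : ∀ v : GV n, ∑ u : GV n, x s(v, u) = 1 := by
    intro v; rw [← sum_incident_eq]; exact hs v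
  have hrow : ∀ b : Bk n, ∑ c : Bk n, x s(b.1, gmap hn (c).1) = 1 := by
    intro b
    rw [← hvsum b.1]
    rw [show (∑ c : Bk n, x s(b.1, gmap hn (c).1))
        = ∑ u ∈ Finset.univ.image (fun c : Bk n => gmap hn c.1), x s(b.1, u) from
      (Finset.sum_image (f := fun u => x s(b.1, u)) (fun a _ c _ h => gmap_inj' hn h)).symm]
    apply Finset.sum_subset (Finset.subset_univ _)
    intro u _ hu
    apply hz
    intro hadj
    rw [SimpleGraph.mem_edgeSet] at hadj
    have hpar := grid_adj_parity hadj
    have hb := b.2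
    have hu2 : (u.1.val + u.2.val) % 2 = 1 := by omega
    obtain ⟨c, hc⟩ := gmap_surj_white hn hev u hu2
    exact hu (Finset.mem_image.2 ⟨c, Finset.mem_univ _, hc⟩)
  have hcol : ∀ c : Bk n, ∑ b : Bk n, x s(b.1, gmap hn (c).1) = 1 := by
    intro c
    rw [← hvsum (gmap hn c.1)]
    have hswap : ∀ b : Bk n, x s(b.1, gmap hn c.1) = x s(gmap hn c.1, b.1) := by
      intro b; rw [Sym2.eq_swap]
    simp only [hswap]
    rw [show (∑ b : Bk n, x s(gmap hn c.1, b.1))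
        = ∑ u ∈ Finset.univ.image (fun b : Bk n => b.1), x s(gmap hn c.1, u) from
      (Finset.sum_image (f := fun u => x s(gmap hn c.1, u)) (fun a _ b _ h => Subtype.ext h)).symm]
    apply Finset.sum_subset (Finset.subset_univ _)
    intro u _ hu
    apply hz
    intro hadj
    rw [SimpleGraph.mem_edgeSet] at hadj
    have hpar := grid_adj_parity hadj
    have hgc := gmap_white hn hev c
    have hu2 : (u.1.val + u.2.val) % 2 = 0 := by omega
    exact hu (Finset.mem_image.2 ⟨⟨u, hu2⟩, Finset.mem_univ _, rfl⟩)
  have hMds : (Matrix.of fun b c : Bk n => x s(b.1, gmap hn c.1)) ∈ doublyStochastic ℝ (Bk n) := by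
    rw [mem_doublyStochastic_iff_sum]
    exact ⟨fun i j => hnn _, hrow, hcol⟩
  obtain ⟨w, hw0, hw1, hwM⟩ := exists_eq_sum_perm_of_mem_doublyStochastic hMds
  have hentry : ∀ b c : Bk n,
      x s(b.1, gmap hn c.1) = ∑ σ : Equiv.Perm (Bk n), w σ * (if σ b = c then 1 else 0) := by
    intro b c
    have h1 : x s(b.1, gmap hn c.1) = (∑ σ : Equiv.Perm (Bk n), w σ • σ.permMatrix ℝ) b c := by
      rw [hwM, Matrix.of_apply]
    rw [h1, Matrix.sum_apply]
    apply Finset.sum_congr rfl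
    intro σ _
    simp [Equiv.Perm.permMatrix, PEquiv.toMatrix_apply, Equiv.toPEquiv_apply,
      Option.mem_def, Option.some.injEq, mul_ite, eq_comm]
  have hadjs : ∀ σ : Equiv.Perm (Bk n), w σ ≠ 0 →
      ∀ b : Bk n, (gridGraph 3 n).Adj b.1 (gmap hn (σ b).1) := by
    intro σ hσ b
    by_contra hnadj
    have hM0 : x s(b.1, gmap hn (σ b).1) = 0 := hz _ (by rwa [SimpleGraph.mem_edgeSet])
    rw [hentry] at hM0
    have hle : w σ * (if σ b = σ b then 1 else 0)
        ≤ ∑ τ : Equiv.Perm (Bk n), w τ * (if τ b = σ b then 1 else 0) := by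
      apply Finset.single_le_sum (f := fun τ => w τ * (if τ b = σ b then 1 else 0))
      · intro τ _
        by_cases h : τ b = σ b <;> simp [h, hw0 τ]
      · exact Finset.mem_univ σ
    rw [if_pos rfl, mul_one, hM0] at hle
    exact hσ (le_antisymm hle (hw0 σ))
  have hsub : ∀ σ : Equiv.Perm (Bk n), w σ ≠ 0 →
      permVec hn σ ∈ {y : Sym2 (GV n) → ℝ |
        ∃ M : (gridGraph 3 n).Subgraph, M.IsPerfectMatching ∧ y = Set.indicator M.edgeSet 1} := by
    intro σ hσ
    exact ⟨permSub hn σ (hadjs σ hσ), permSub_isPM hn hev σ (hadjs σ hσ),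
      by rw [permVec, permSub_edgeSet]⟩
  set supp := Finset.univ.filter (fun σ : Equiv.Perm (Bk n) => w σ ≠ 0) with hsuppdef
  have hsum_supp : ∑ σ ∈ supp, w σ = 1 := by
    rw [hsuppdef, Finset.sum_filter_ne_zero]; exact hw1
  have hordered : ∀ p q : GV n, (p.1.val + p.2.val) % 2 = 0 → (q.1.val + q.2.val) % 2 = 1 →
      x s(p,q) = ∑ σ ∈ supp, w σ * permVec hn σ s(p,q) := by
    intro p q hp hq
    obtain ⟨c, hc⟩ := gmap_surj_white hn hev q hq
    have hx1 : x s(p,q) = x s((⟨p, hp⟩ : Bk n).1, gmap hn c.1) := by rw [hc]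
    rw [hx1, hentry]
    rw [show (∑ σ : Equiv.Perm (Bk n), w σ * (if σ ⟨p, hp⟩ = c then 1 else 0))
        = ∑ σ ∈ supp, w σ * (if σ ⟨p, hp⟩ = c then 1 else 0) from
      (Finset.sum_subset (Finset.filter_subset _ _) (fun τ _ hτ => by
        have h2 : ¬ w τ ≠ 0 := fun hh => hτ (Finset.mem_filter.2 ⟨Finset.mem_univ _, hh⟩)
        rw [not_not.1 h2, zero_mul])).symm]
    apply Finset.sum_congr rfl
    intro σ _
    congr 1
    by_cases h : σ ⟨p, hp⟩ = c
    · rw [if_pos h]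
      have hmem : s(p,q) ∈ permEdges hn σ :=
        ⟨⟨p, hp⟩, by rw [h, hc]⟩
      rw [permVec, Set.indicator_of_mem hmem]
      rfl
    · rw [if_neg h]
      have hmem : s(p,q) ∉ permEdges hn σ := by
        rintro ⟨b', hb'⟩
        rw [Sym2.eq_iff] at hb'
        rcases hb' with ⟨h1, h2⟩ | ⟨h1, h2⟩
        · apply h
          have hbb : b' = ⟨p, hp⟩ := Subtype.ext h1.symm
          rw [← hbb]
          apply gmap_inj' hn
          rw [← h2, hc]
        · have := gmap_white hn hev (σ b')
          rw [← h1] at this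
          omega
      rw [permVec, Set.indicator_of_notMem hmem]
  have hxeq : x = supp.centerMass w (permVec hn) := by
    rw [Finset.centerMass_eq_of_sum_1 _ _ hsum_supp]
    funext e
    induction e using Sym2.ind with
    | _ p q =>
      rw [Finset.sum_apply]
      simp only [Pi.smul_apply, smul_eq_mul]
      have hsame : ∀ p q : GV n, (p.1.val + p.2.val) % 2 = (q.1.val + q.2.val) % 2 →
          x s(p,q) = ∑ σ ∈ supp, w σ * permVec hn σ s(p,q) := by
        intro p q hpq
        have hx0 : x s(p,q) = 0 := by
          apply hz
          intro hmem
          rw [SimpleGraph.mem_edgeSet] at hmem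
          exact grid_adj_parity hmem hpq
        rw [hx0]
        symm
        apply Finset.sum_eq_zero
        intro σ _
        have hmem : s(p,q) ∉ permEdges hn σ := by
          rintro ⟨b', hb'⟩
          rw [Sym2.eq_iff] at hb'
          have hbk := b'.2
          have hwt := gmap_white hn hev (σ b')
          rcases hb' with ⟨h1, h2⟩ | ⟨h1, h2⟩
          · rw [← h1] at hbk; rw [← h2] at hwt; omega
          · rw [← h2] at hbk; rw [← h1] at hwt; omega
        rw [permVec, Set.indicator_of_notMem hmem, mul_zero]
      rcases Nat.mod_two_eq_zero_or_one (p.1.val + p.2.val) with hp | hp <;>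
        rcases Nat.mod_two_eq_zero_or_one (q.1.val + q.2.val) with hq | hq
      · exact hsame p q (by omega)
      · exact hordered p q hp hq
      · rw [Sym2.eq_swap]
        exact hordered q p hq hp
      · exact hsame p q (by omega)
  rw [pmPolytope, hxeq]
  apply Finset.centerMass_mem_convexHull
  · exact fun σ _ => hw0 σ
  · rw [hsum_supp]; norm_num
  · intro σ hσ
    exact hsub σ (Finset.mem_filter.1 hσ).2

lemma pm_subset : pmPolytope (gridGraph 3 n) ⊆ gQ n 1 := by
  apply convexHull_min
  · rintro x ⟨M, hM, rfl⟩
    refine ⟨?_, ?_, ?_⟩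
    · intro e he
      exact Set.indicator_of_notMem (fun hmem => he (M.edgeSet_subset hmem)) 1
    · intro v
      rw [sum_incident_eq]
      obtain ⟨u0, hu0, huniq⟩ := hM.1 (hM.2 v)
      rw [Finset.sum_eq_single u0]
      · have : s(v, u0) ∈ M.edgeSet := hu0
        simp [Set.indicator_apply, this]
      · intro b _ hb
        have : s(v, b) ∉ M.edgeSet := by
          intro hmem
          exact hb (huniq b hmem)
        simp [Set.indicator_apply, this]
      · simp
    · intro e
      exact Set.indicator_apply_nonneg (fun _ => zero_le_one)
  · rintro x hx y hy a b ha hb hab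
    refine ⟨?_, ?_, ?_⟩
    · intro e he
      show a * x e + b * y e = 0
      rw [hx.1 e he, hy.1 e he]; ring
    · intro v
      have : ∀ e : Sym2 (GV n), (a • x + b • y) e = a * x e + b * y e := fun e => rfl
      simp only [this]
      rw [Finset.sum_add_distrib, ← Finset.mul_sum, ← Finset.mul_sum, hx.2.1 v, hy.2.1 v]
      linarith
    · intro e
      have hx0 := hx.2.2 e
      have hy0 := hy.2.2 e
      show 0 ≤ a * x e + b * y e
      nlinarith


lemma pm_eq_gQ (hn : 0 < n) (hev : Even n) : pmPolytope (gridGraph 3 n) = gQ n 1 :=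
  le_antisymm pm_subset (gQ_subset_pm hn hev)

lemma smul_pm_eq (hn : 0 < n) (hev : Even n) (t : ℝ) (ht : 0 < t) :
    t • pmPolytope (gridGraph 3 n) = gQ n t := by
  rw [pm_eq_gQ hn hev]
  ext y
  constructor
  · rintro ⟨p, hp, rfl⟩
    refine ⟨?_, ?_, ?_⟩
    · intro e he; show t * p e = 0; rw [hp.1 e he, mul_zero]
    · intro v
      have hb : ∀ e : Sym2 (GV n), (t • p) e = t * p e := fun e => rfl
      simp only [hb]
      rw [← Finset.mul_sum, hp.2.1 v, mul_one]
    · intro e; exact mul_nonneg ht.le (hp.2.2 e)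
  · intro hy
    refine ⟨t⁻¹ • y, ⟨?_, ?_, ?_⟩, ?_⟩
    · intro e he; show t⁻¹ * y e = 0; rw [hy.1 e he, mul_zero]
    · intro v
      have hb : ∀ e : Sym2 (GV n), (t⁻¹ • y) e = t⁻¹ * y e := fun e => rfl
      simp only [hb]
      rw [← Finset.mul_sum, hy.2.1 v, inv_mul_cancel₀ ht.ne']
    · intro e; exact mul_nonneg (inv_nonneg.2 ht.le) (hy.2.2 e)
    · show t • t⁻¹ • y = y
      rw [smul_inv_smul₀ ht.ne']


def gU (n : ℕ) (t : ℝ) : Set (Sym2 (GV n) → ℝ) :=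
  {x | (∀ e ∉ (gridGraph 3 n).edgeSet, x e = 0) ∧
       (∀ v : GV n, ∑ e ∈ Finset.univ.filter (fun e : Sym2 (GV n) => v ∈ e), x e = t) ∧
       (∀ e ∈ (gridGraph 3 n).edgeSet, 0 < x e)}

noncomputable def gA (n : ℕ) (t : ℝ) : AffineSubspace ℝ (Sym2 (GV n) → ℝ) where
  carrier := {x | (∀ e ∉ (gridGraph 3 n).edgeSet, x e = 0) ∧
       (∀ v : GV n, ∑ e ∈ Finset.univ.filter (fun e : Sym2 (GV n) => v ∈ e), x e = t)}
  smul_vsub_vadd_mem' := by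
    intro c p1 p2 p3 h1 h2 h3
    constructor
    · intro e he
      show c * (p1 e - p2 e) + p3 e = 0
      rw [h1.1 e he, h2.1 e he, h3.1 e he]; ring
    · intro v
      have : ∀ e : Sym2 (GV n), (c • (p1 -ᵥ p2) +ᵥ p3) e = c * (p1 e - p2 e) + p3 e := by
        intro e; rfl
      simp only [this]
      rw [Finset.sum_add_distrib, ← Finset.mul_sum, Finset.sum_sub_distrib,
        h1.2 v, h2.2 v, h3.2 v]
      ring

lemma gU_subset_gQ (t : ℝ) : gU n t ⊆ gQ n t := by
  rintro x ⟨h1, h2, h3⟩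
  refine ⟨h1, h2, fun e => ?_⟩
  by_cases he : e ∈ (gridGraph 3 n).edgeSet
  · exact (h3 e he).le
  · rw [h1 e he]

lemma gQ_subset_gA (t : ℝ) : gQ n t ⊆ (gA n t : Set _) := fun x hx => ⟨hx.1, hx.2.1⟩

lemma intrinsic_eq (t : ℝ) (u : Sym2 (GV n) → ℝ) (hu : u ∈ gU n t) :
    intrinsicInterior ℝ (gQ n t) = gU n t := by
  have hspan : affineSpan ℝ (gQ n t) ≤ gA n t := by
    rw [affineSpan_le]; exact gQ_subset_gA t
  apply Set.Subset.antisymm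
  · intro xx hxx
    have hxQ : xx ∈ gQ n t := intrinsicInterior_subset hxx
    obtain ⟨z, hz, hzx⟩ := hxx
    refine ⟨hxQ.1, hxQ.2.1, fun e he => ?_⟩
    by_contra hle
    have hxe : xx e = 0 := le_antisymm (not_lt.1 hle) (hxQ.2.2 e)
    have huspan : u ∈ affineSpan ℝ (gQ n t) := subset_affineSpan ℝ _ (gU_subset_gQ t hu)
    have hxspan : xx ∈ affineSpan ℝ (gQ n t) := subset_affineSpan ℝ _ hxQ
    have hγmem : ∀ s : ℝ, s • (xx - u) + xx ∈ affineSpan ℝ (gQ n t) := by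
      intro s
      have := AffineSubspace.smul_vsub_vadd_mem (affineSpan ℝ (gQ n t)) s hxspan huspan hxspan
      simpa [vsub_eq_sub, vadd_eq_add] using this
    set γ : ℝ → affineSpan ℝ (gQ n t) := fun s => ⟨s • (xx - u) + xx, hγmem s⟩ with hγdef
    have hγ : Continuous γ := by
      apply Continuous.subtype_mk
      exact (continuous_id.smul continuous_const).add continuous_const
    have h0 : γ 0 = z := by
      apply Subtype.ext; simp [γ, hzx]
    have hnh : γ ⁻¹' interior ((↑) ⁻¹' gQ n t : Set (affineSpan ℝ (gQ n t))) ∈ nhds (0 : ℝ) := by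
      apply (isOpen_interior.preimage hγ).mem_nhds
      rw [Set.mem_preimage, h0]; exact hz
    obtain ⟨ε, hε, hball⟩ := Metric.mem_nhds_iff.1 hnh
    have hmem : γ (ε/2) ∈ ((↑) ⁻¹' gQ n t : Set (affineSpan ℝ (gQ n t))) := by
      apply interior_subset
      apply hball
      have : dist (ε/2) (0:ℝ) < ε := by
        rw [Real.dist_eq, sub_zero, abs_of_pos (half_pos hε)]; linarith
      exact this
    have hQ2 : (ε/2) • (xx - u) + xx ∈ gQ n t := hmem
    have hneg : ((ε/2) • (xx - u) + xx) e < 0 := by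
      have hue : 0 < u e := hu.2.2 e he
      have : ((ε/2) • (xx - u) + xx) e = (ε/2) * (xx e - u e) + xx e := rfl
      rw [this, hxe]
      nlinarith
    exact absurd (hQ2.2.2 e) (not_le.2 hneg)
  · intro xx hxx
    have hxQ := gU_subset_gQ t hxx
    have hxspan := subset_affineSpan ℝ (gQ n t) hxQ
    refine ⟨⟨xx, hxspan⟩, ?_, rfl⟩
    rw [mem_interior]
    refine ⟨(↑) ⁻¹' {y : Sym2 (GV n) → ℝ | ∀ e ∈ (gridGraph 3 n).edgeSet, 0 < y e}, ?_, ?_, ?_⟩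
    · rintro ⟨y, hy⟩ hypos
      have hyA : y ∈ (gA n t : Set _) := hspan hy
      refine ⟨hyA.1, hyA.2, fun e => ?_⟩
      show (0:ℝ) ≤ y e
      by_cases he : e ∈ (gridGraph 3 n).edgeSet
      · exact (hypos e he).le
      · rw [hyA.1 e he]
    · apply IsOpen.preimage continuous_subtype_val
      have : {y : Sym2 (GV n) → ℝ | ∀ e ∈ (gridGraph 3 n).edgeSet, 0 < y e}
          = ⋂ e ∈ (gridGraph 3 n).edgeSet, {y : Sym2 (GV n) → ℝ | 0 < y e} := by
        ext y; simp
      rw [this]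
      exact (Set.toFinite _).isOpen_biInter
        (fun e _ => isOpen_lt continuous_const (continuous_apply e))
    · exact fun e he => hxx.2.2 e he


section Comb
variable (x : Sym2 (GV n) → ℤ)

def Hh (j : Fin 3) (i : ℕ) : ℤ :=
  if h : i + 1 < n then x s(((⟨i, Nat.lt_of_succ_lt h⟩ : Fin n), j), ((⟨i+1, h⟩ : Fin n), j)) else 0

def Vv0 (i : ℕ) : ℤ :=
  if h : i < n then x s(((⟨i, h⟩ : Fin n), (0 : Fin 3)), ((⟨i, h⟩ : Fin n), (1 : Fin 3))) else 0

def Vv1 (i : ℕ) : ℤ :=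
  if h : i < n then x s(((⟨i, h⟩ : Fin n), (1 : Fin 3)), ((⟨i, h⟩ : Fin n), (2 : Fin 3))) else 0

lemma X_right (i : ℕ) (hi : i < n) (h1 : i + 1 < n) (j : Fin 3) :
    x s(((⟨i, hi⟩ : Fin n), j), ((⟨i+1, h1⟩ : Fin n), j)) = Hh x j i := by
  rw [Hh, dif_pos h1]

lemma X_left (i : ℕ) (hi : i < n) (h0 : 0 < i) (j : Fin 3) :
    x s(((⟨i, hi⟩ : Fin n), j), ((⟨i-1, by omega⟩ : Fin n), j)) = Hh x j (i-1) := by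
  have h1 : (i-1) + 1 < n := by omega
  rw [Hh, dif_pos h1]
  have hvv : (⟨i-1+1, h1⟩ : Fin n) = ⟨i, hi⟩ := Fin.ext (by simp; omega)
  rw [hvv]
  exact congrArg x Sym2.eq_swap

lemma Xv01 (i : ℕ) (hi : i < n) :
    x s(((⟨i, hi⟩ : Fin n), (0 : Fin 3)), ((⟨i, hi⟩ : Fin n), (1 : Fin 3))) = Vv0 x i := by
  rw [Vv0, dif_pos hi]

lemma Xv10 (i : ℕ) (hi : i < n) :
    x s(((⟨i, hi⟩ : Fin n), (1 : Fin 3)), ((⟨i, hi⟩ : Fin n), (0 : Fin 3))) = Vv0 x i := by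
  rw [← Xv01 x i hi]; exact congrArg x Sym2.eq_swap

lemma Xv12 (i : ℕ) (hi : i < n) :
    x s(((⟨i, hi⟩ : Fin n), (1 : Fin 3)), ((⟨i, hi⟩ : Fin n), (2 : Fin 3))) = Vv1 x i := by
  rw [Vv1, dif_pos hi]

lemma Xv21 (i : ℕ) (hi : i < n) :
    x s(((⟨i, hi⟩ : Fin n), (2 : Fin 3)), ((⟨i, hi⟩ : Fin n), (1 : Fin 3))) = Vv1 x i := by
  rw [← Xv12 x i hi]; exact congrArg x Sym2.eq_swap

lemma sum_row0 (hz : ∀ e ∉ (gridGraph 3 n).edgeSet, x e = 0) (i : ℕ) (hi : i < n) :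
    ∑ e ∈ Finset.univ.filter (fun e : Sym2 (GV n) => ((⟨i, hi⟩ : Fin n), (0 : Fin 3)) ∈ e), x e
      = (if 0 < i then Hh x 0 (i-1) else 0) + (if i+1 < n then Hh x 0 i else 0) + Vv0 x i := by
  rw [sum_incident_eq]
  by_cases h0 : 0 < i <;> by_cases h1 : i + 1 < n
  · rw [← Finset.sum_subset (Finset.subset_univ
      ({((⟨i-1, by omega⟩ : Fin n), (0:Fin 3)), ((⟨i+1, h1⟩ : Fin n), (0:Fin 3)),
        ((⟨i, hi⟩ : Fin n), (1:Fin 3))} : Finset (GV n)))]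
    · rw [Finset.sum_insert (by simp [Prod.ext_iff, Fin.ext_iff] <;> omega),
        Finset.sum_insert (by simp [Prod.ext_iff, Fin.ext_iff] <;> omega),
        Finset.sum_singleton]
      rw [X_left x i hi h0, X_right x i hi h1, Xv01 x i hi, if_pos h0, if_pos h1]
      ring
    · intro u _ hu
      apply hz
      intro hmem
      rw [SimpleGraph.mem_edgeSet, grid_adj_iff] at hmem
      apply hu
      obtain ⟨⟨a, ha⟩, b⟩ := u
      simp only [Fin.ext_iff] at hmem
      simp only [Finset.mem_insert, Finset.mem_singleton, Prod.ext_iff, Fin.ext_iff]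
      simp only [Fin.val_zero, Fin.val_one] at hmem ⊢
      have hb3 := b.isLt
      omega
  · rw [← Finset.sum_subset (Finset.subset_univ
      ({((⟨i-1, by omega⟩ : Fin n), (0:Fin 3)),
        ((⟨i, hi⟩ : Fin n), (1:Fin 3))} : Finset (GV n)))]
    · rw [Finset.sum_insert (by simp [Prod.ext_iff, Fin.ext_iff] <;> omega),
        Finset.sum_singleton]
      rw [X_left x i hi h0, Xv01 x i hi, if_pos h0, if_neg h1, add_zero]
    · intro u _ hu
      apply hz
      intro hmem
      rw [SimpleGraph.mem_edgeSet, grid_adj_iff] at hmem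
      apply hu
      obtain ⟨⟨a, ha⟩, b⟩ := u
      simp only [Fin.ext_iff] at hmem
      simp only [Finset.mem_insert, Finset.mem_singleton, Prod.ext_iff, Fin.ext_iff]
      simp only [Fin.val_zero, Fin.val_one] at hmem ⊢
      have hb3 := b.isLt
      omega
  · rw [← Finset.sum_subset (Finset.subset_univ
      ({((⟨i+1, h1⟩ : Fin n), (0:Fin 3)),
        ((⟨i, hi⟩ : Fin n), (1:Fin 3))} : Finset (GV n)))]
    · rw [Finset.sum_insert (by simp [Prod.ext_iff, Fin.ext_iff] <;> omega),
        Finset.sum_singleton]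
      rw [X_right x i hi h1, Xv01 x i hi, if_neg h0, if_pos h1, zero_add]
    · intro u _ hu
      apply hz
      intro hmem
      rw [SimpleGraph.mem_edgeSet, grid_adj_iff] at hmem
      apply hu
      obtain ⟨⟨a, ha⟩, b⟩ := u
      simp only [Fin.ext_iff] at hmem
      simp only [Finset.mem_insert, Finset.mem_singleton, Prod.ext_iff, Fin.ext_iff]
      simp only [Fin.val_zero, Fin.val_one] at hmem ⊢
      have hb3 := b.isLt
      omega
  · rw [← Finset.sum_subset (Finset.subset_univ
      ({((⟨i, hi⟩ : Fin n), (1:Fin 3))} : Finset (GV n)))]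
    · rw [Finset.sum_singleton]
      rw [Xv01 x i hi, if_neg h0, if_neg h1]
      ring
    · intro u _ hu
      apply hz
      intro hmem
      rw [SimpleGraph.mem_edgeSet, grid_adj_iff] at hmem
      apply hu
      obtain ⟨⟨a, ha⟩, b⟩ := u
      simp only [Fin.ext_iff] at hmem
      simp only [Finset.mem_singleton, Prod.ext_iff, Fin.ext_iff]
      simp only [Fin.val_zero, Fin.val_one] at hmem ⊢
      have hb3 := b.isLt
      omega

lemma sum_row1 (hz : ∀ e ∉ (gridGraph 3 n).edgeSet, x e = 0) (i : ℕ) (hi : i < n) :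
    ∑ e ∈ Finset.univ.filter (fun e : Sym2 (GV n) => ((⟨i, hi⟩ : Fin n), (1 : Fin 3)) ∈ e), x e
      = (if 0 < i then Hh x 1 (i-1) else 0) + (if i+1 < n then Hh x 1 i else 0)
        + Vv0 x i + Vv1 x i := by
  rw [sum_incident_eq]
  by_cases h0 : 0 < i <;> by_cases h1 : i + 1 < n
  · rw [← Finset.sum_subset (Finset.subset_univ
      ({((⟨i-1, by omega⟩ : Fin n), (1:Fin 3)), ((⟨i+1, h1⟩ : Fin n), (1:Fin 3)),
        ((⟨i, hi⟩ : Fin n), (0:Fin 3)), ((⟨i, hi⟩ : Fin n), (2:Fin 3))} : Finset (GV n)))]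
    · rw [Finset.sum_insert (by simp [Prod.ext_iff, Fin.ext_iff] <;> omega),
        Finset.sum_insert (by simp [Prod.ext_iff, Fin.ext_iff] <;> omega),
        Finset.sum_insert (by simp [Prod.ext_iff, Fin.ext_iff] <;> omega),
        Finset.sum_singleton]
      rw [X_left x i hi h0, X_right x i hi h1, Xv10 x i hi, Xv12 x i hi,
        if_pos h0, if_pos h1]
      ring
    · intro u _ hu
      apply hz
      intro hmem
      rw [SimpleGraph.mem_edgeSet, grid_adj_iff] at hmem
      apply hu
      obtain ⟨⟨a, ha⟩, b⟩ := u
      simp only [Fin.ext_iff] at hmem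
      simp only [Finset.mem_insert, Finset.mem_singleton, Prod.ext_iff, Fin.ext_iff]
      simp only [Fin.val_zero, Fin.val_one, Fin.val_two] at hmem ⊢
      have hb3 := b.isLt
      omega
  · rw [← Finset.sum_subset (Finset.subset_univ
      ({((⟨i-1, by omega⟩ : Fin n), (1:Fin 3)),
        ((⟨i, hi⟩ : Fin n), (0:Fin 3)), ((⟨i, hi⟩ : Fin n), (2:Fin 3))} : Finset (GV n)))]
    · rw [Finset.sum_insert (by simp [Prod.ext_iff, Fin.ext_iff] <;> omega),
        Finset.sum_insert (by simp [Prod.ext_iff, Fin.ext_iff] <;> omega),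
        Finset.sum_singleton]
      rw [X_left x i hi h0, Xv10 x i hi, Xv12 x i hi, if_pos h0, if_neg h1]
      ring
    · intro u _ hu
      apply hz
      intro hmem
      rw [SimpleGraph.mem_edgeSet, grid_adj_iff] at hmem
      apply hu
      obtain ⟨⟨a, ha⟩, b⟩ := u
      simp only [Fin.ext_iff] at hmem
      simp only [Finset.mem_insert, Finset.mem_singleton, Prod.ext_iff, Fin.ext_iff]
      simp only [Fin.val_zero, Fin.val_one, Fin.val_two] at hmem ⊢
      have hb3 := b.isLt
      omega
  · rw [← Finset.sum_subset (Finset.subset_univ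
      ({((⟨i+1, h1⟩ : Fin n), (1:Fin 3)),
        ((⟨i, hi⟩ : Fin n), (0:Fin 3)), ((⟨i, hi⟩ : Fin n), (2:Fin 3))} : Finset (GV n)))]
    · rw [Finset.sum_insert (by simp [Prod.ext_iff, Fin.ext_iff] <;> omega),
        Finset.sum_insert (by simp [Prod.ext_iff, Fin.ext_iff] <;> omega),
        Finset.sum_singleton]
      rw [X_right x i hi h1, Xv10 x i hi, Xv12 x i hi, if_neg h0, if_pos h1]
      ring
    · intro u _ hu
      apply hz
      intro hmem
      rw [SimpleGraph.mem_edgeSet, grid_adj_iff] at hmem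
      apply hu
      obtain ⟨⟨a, ha⟩, b⟩ := u
      simp only [Fin.ext_iff] at hmem
      simp only [Finset.mem_insert, Finset.mem_singleton, Prod.ext_iff, Fin.ext_iff]
      simp only [Fin.val_zero, Fin.val_one, Fin.val_two] at hmem ⊢
      have hb3 := b.isLt
      omega
  · rw [← Finset.sum_subset (Finset.subset_univ
      ({((⟨i, hi⟩ : Fin n), (0:Fin 3)), ((⟨i, hi⟩ : Fin n), (2:Fin 3))} : Finset (GV n)))]
    · rw [Finset.sum_insert (by simp [Prod.ext_iff, Fin.ext_iff] <;> omega),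
        Finset.sum_singleton]
      rw [Xv10 x i hi, Xv12 x i hi, if_neg h0, if_neg h1]
      ring
    · intro u _ hu
      apply hz
      intro hmem
      rw [SimpleGraph.mem_edgeSet, grid_adj_iff] at hmem
      apply hu
      obtain ⟨⟨a, ha⟩, b⟩ := u
      simp only [Fin.ext_iff] at hmem
      simp only [Finset.mem_insert, Finset.mem_singleton, Prod.ext_iff, Fin.ext_iff]
      simp only [Fin.val_zero, Fin.val_one, Fin.val_two] at hmem ⊢
      have hb3 := b.isLt
      omega

lemma sum_row2 (hz : ∀ e ∉ (gridGraph 3 n).edgeSet, x e = 0) (i : ℕ) (hi : i < n) :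
    ∑ e ∈ Finset.univ.filter (fun e : Sym2 (GV n) => ((⟨i, hi⟩ : Fin n), (2 : Fin 3)) ∈ e), x e
      = (if 0 < i then Hh x 2 (i-1) else 0) + (if i+1 < n then Hh x 2 i else 0) + Vv1 x i := by
  rw [sum_incident_eq]
  by_cases h0 : 0 < i <;> by_cases h1 : i + 1 < n
  · rw [← Finset.sum_subset (Finset.subset_univ
      ({((⟨i-1, by omega⟩ : Fin n), (2:Fin 3)), ((⟨i+1, h1⟩ : Fin n), (2:Fin 3)),
        ((⟨i, hi⟩ : Fin n), (1:Fin 3))} : Finset (GV n)))]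
    · rw [Finset.sum_insert (by simp [Prod.ext_iff, Fin.ext_iff] <;> omega),
        Finset.sum_insert (by simp [Prod.ext_iff, Fin.ext_iff] <;> omega),
        Finset.sum_singleton]
      rw [X_left x i hi h0, X_right x i hi h1, Xv21 x i hi, if_pos h0, if_pos h1]
      ring
    · intro u _ hu
      apply hz
      intro hmem
      rw [SimpleGraph.mem_edgeSet, grid_adj_iff] at hmem
      apply hu
      obtain ⟨⟨a, ha⟩, b⟩ := u
      simp only [Fin.ext_iff] at hmem
      simp only [Finset.mem_insert, Finset.mem_singleton, Prod.ext_iff, Fin.ext_iff]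
      simp only [Fin.val_zero, Fin.val_one, Fin.val_two] at hmem ⊢
      have hb3 := b.isLt
      omega
  · rw [← Finset.sum_subset (Finset.subset_univ
      ({((⟨i-1, by omega⟩ : Fin n), (2:Fin 3)),
        ((⟨i, hi⟩ : Fin n), (1:Fin 3))} : Finset (GV n)))]
    · rw [Finset.sum_insert (by simp [Prod.ext_iff, Fin.ext_iff] <;> omega),
        Finset.sum_singleton]
      rw [X_left x i hi h0, Xv21 x i hi, if_pos h0, if_neg h1, add_zero]
    · intro u _ hu
      apply hz
      intro hmem
      rw [SimpleGraph.mem_edgeSet, grid_adj_iff] at hmem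
      apply hu
      obtain ⟨⟨a, ha⟩, b⟩ := u
      simp only [Fin.ext_iff] at hmem
      simp only [Finset.mem_insert, Finset.mem_singleton, Prod.ext_iff, Fin.ext_iff]
      simp only [Fin.val_zero, Fin.val_one, Fin.val_two] at hmem ⊢
      have hb3 := b.isLt
      omega
  · rw [← Finset.sum_subset (Finset.subset_univ
      ({((⟨i+1, h1⟩ : Fin n), (2:Fin 3)),
        ((⟨i, hi⟩ : Fin n), (1:Fin 3))} : Finset (GV n)))]
    · rw [Finset.sum_insert (by simp [Prod.ext_iff, Fin.ext_iff] <;> omega),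
        Finset.sum_singleton]
      rw [X_right x i hi h1, Xv21 x i hi, if_neg h0, if_pos h1, zero_add]
    · intro u _ hu
      apply hz
      intro hmem
      rw [SimpleGraph.mem_edgeSet, grid_adj_iff] at hmem
      apply hu
      obtain ⟨⟨a, ha⟩, b⟩ := u
      simp only [Fin.ext_iff] at hmem
      simp only [Finset.mem_insert, Finset.mem_singleton, Prod.ext_iff, Fin.ext_iff]
      simp only [Fin.val_zero, Fin.val_one, Fin.val_two] at hmem ⊢
      have hb3 := b.isLt
      omega
  · rw [← Finset.sum_subset (Finset.subset_univ
      ({((⟨i, hi⟩ : Fin n), (1:Fin 3))} : Finset (GV n)))]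
    · rw [Finset.sum_singleton]
      rw [Xv21 x i hi, if_neg h0, if_neg h1]
      ring
    · intro u _ hu
      apply hz
      intro hmem
      rw [SimpleGraph.mem_edgeSet, grid_adj_iff] at hmem
      apply hu
      obtain ⟨⟨a, ha⟩, b⟩ := u
      simp only [Fin.ext_iff] at hmem
      simp only [Finset.mem_singleton, Prod.ext_iff, Fin.ext_iff]
      simp only [Fin.val_zero, Fin.val_one, Fin.val_two] at hmem ⊢
      have hb3 := b.isLt
      omega

lemma Hh_pos (hpos : ∀ e ∈ (gridGraph 3 n).edgeSet, 1 ≤ x e) (j : Fin 3) (i : ℕ)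
    (h1 : i + 1 < n) : 1 ≤ Hh x j i := by
  rw [Hh, dif_pos h1]
  apply hpos
  rw [SimpleGraph.mem_edgeSet, grid_adj_iff]
  exact Or.inl ⟨rfl, Or.inl rfl⟩

lemma Vv0_pos (hpos : ∀ e ∈ (gridGraph 3 n).edgeSet, 1 ≤ x e) (i : ℕ)
    (hi : i < n) : 1 ≤ Vv0 x i := by
  rw [Vv0, dif_pos hi]
  apply hpos
  rw [SimpleGraph.mem_edgeSet, grid_adj_iff]
  exact Or.inr ⟨rfl, Or.inl rfl⟩

lemma Vv1_pos (hpos : ∀ e ∈ (gridGraph 3 n).edgeSet, 1 ≤ x e) (i : ℕ)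
    (hi : i < n) : 1 ≤ Vv1 x i := by
  rw [Vv1, dif_pos hi]
  apply hpos
  rw [SimpleGraph.mem_edgeSet, grid_adj_iff]
  exact Or.inr ⟨rfl, Or.inl rfl⟩

lemma no_small (hz : ∀ e ∉ (gridGraph 3 n).edgeSet, x e = 0)
    (hpos : ∀ e ∈ (gridGraph 3 n).edgeSet, 1 ≤ x e) (t : ℤ)
    (hs : ∀ v : GV n, ∑ e ∈ Finset.univ.filter (fun e : Sym2 (GV n) => v ∈ e), x e = t)
    (hn4 : 4 ≤ n) (ht : t ≤ 4) : False := by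
  have h0n : (0:ℕ) < n := by omega
  have h1n : (1:ℕ) < n := by omega
  have e00 := hs ((⟨0, h0n⟩ : Fin n), (0:Fin 3))
  rw [sum_row0 x hz 0 h0n, if_neg (by omega), if_pos (by omega), zero_add] at e00
  have e01 := hs ((⟨0, h0n⟩ : Fin n), (1:Fin 3))
  rw [sum_row1 x hz 0 h0n, if_neg (by omega), if_pos (by omega), zero_add] at e01
  have e02 := hs ((⟨0, h0n⟩ : Fin n), (2:Fin 3))
  rw [sum_row2 x hz 0 h0n, if_neg (by omega), if_pos (by omega), zero_add] at e02
  have e10 := hs ((⟨1, h1n⟩ : Fin n), (0:Fin 3))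
  rw [sum_row0 x hz 1 h1n, if_pos (by omega), if_pos (by omega)] at e10
  have e11 := hs ((⟨1, h1n⟩ : Fin n), (1:Fin 3))
  rw [sum_row1 x hz 1 h1n, if_pos (by omega), if_pos (by omega)] at e11
  have e12 := hs ((⟨1, h1n⟩ : Fin n), (2:Fin 3))
  rw [sum_row2 x hz 1 h1n, if_pos (by omega), if_pos (by omega)] at e12
  rw [show (1:ℕ) - 1 = 0 from rfl] at e10 e11 e12
  have p1 := Hh_pos x hpos 0 0 (by omega)
  have p2 := Hh_pos x hpos 1 0 (by omega)
  have p3 := Hh_pos x hpos 2 0 (by omega)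
  have p4 := Hh_pos x hpos 0 1 (by omega)
  have p5 := Hh_pos x hpos 1 1 (by omega)
  have p6 := Hh_pos x hpos 2 1 (by omega)
  have p7 := Vv0_pos x hpos 0 h0n
  have p8 := Vv1_pos x hpos 0 h0n
  have p9 := Vv0_pos x hpos 1 h1n
  have p10 := Vv1_pos x hpos 1 h1n
  omega

lemma col_vals (hz : ∀ e ∉ (gridGraph 3 n).edgeSet, x e = 0)
    (hpos : ∀ e ∈ (gridGraph 3 n).edgeSet, 1 ≤ x e)
    (hs : ∀ v : GV n, ∑ e ∈ Finset.univ.filter (fun e : Sym2 (GV n) => v ∈ e), x e = 5)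
    (hn4 : 4 ≤ n) :
    ∀ i, i + 1 < n →
      Hh x 0 i = (if i % 2 = 0 then 3 else 1) ∧ Hh x 2 i = (if i % 2 = 0 then 3 else 1) ∧
      Hh x 1 i = (if i % 2 = 0 then 1 else 2) ∧
      Vv0 x i = (if i = 0 then 2 else 1) ∧ Vv1 x i = (if i = 0 then 2 else 1) := by
  intro i
  induction i using Nat.strong_induction_on with
  | _ i ih =>
    intro hi1
    rcases Nat.lt_or_ge i 2 with h2 | h2
    · have h0n : (0:ℕ) < n := by omega
      have h1n : (1:ℕ) < n := by omega
      have e00 := hs ((⟨0, h0n⟩ : Fin n), (0:Fin 3))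
      rw [sum_row0 x hz 0 h0n, if_neg (by omega), if_pos (by omega), zero_add] at e00
      have e01 := hs ((⟨0, h0n⟩ : Fin n), (1:Fin 3))
      rw [sum_row1 x hz 0 h0n, if_neg (by omega), if_pos (by omega), zero_add] at e01
      have e02 := hs ((⟨0, h0n⟩ : Fin n), (2:Fin 3))
      rw [sum_row2 x hz 0 h0n, if_neg (by omega), if_pos (by omega), zero_add] at e02
      have e10 := hs ((⟨1, h1n⟩ : Fin n), (0:Fin 3))
      rw [sum_row0 x hz 1 h1n, if_pos (by omega), if_pos (by omega)] at e10
      have e11 := hs ((⟨1, h1n⟩ : Fin n), (1:Fin 3))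
      rw [sum_row1 x hz 1 h1n, if_pos (by omega), if_pos (by omega)] at e11
      have e12 := hs ((⟨1, h1n⟩ : Fin n), (2:Fin 3))
      rw [sum_row2 x hz 1 h1n, if_pos (by omega), if_pos (by omega)] at e12
      rw [show (1:ℕ) - 1 = 0 from rfl] at e10 e11 e12
      have p1 := Hh_pos x hpos 0 0 (by omega)
      have p2 := Hh_pos x hpos 1 0 (by omega)
      have p3 := Hh_pos x hpos 2 0 (by omega)
      have p4 := Hh_pos x hpos 0 1 (by omega)
      have p5 := Hh_pos x hpos 1 1 (by omega)
      have p6 := Hh_pos x hpos 2 1 (by omega)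
      have p7 := Vv0_pos x hpos 0 h0n
      have p8 := Vv1_pos x hpos 0 h0n
      have p9 := Vv0_pos x hpos 1 h1n
      have p10 := Vv1_pos x hpos 1 h1n
      interval_cases i
      · refine ⟨?_, ?_, ?_, ?_, ?_⟩ <;> norm_num <;> omega
      · refine ⟨?_, ?_, ?_, ?_, ?_⟩ <;> norm_num <;> omega
    · obtain ⟨hH0, hH2, hH1, hV0, hV1⟩ := ih (i-1) (by omega) (by omega)
      have hi : i < n := by omega
      have e0 := hs ((⟨i, hi⟩ : Fin n), (0:Fin 3))
      rw [sum_row0 x hz i hi, if_pos (by omega), if_pos (by omega)] at e0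
      have e1 := hs ((⟨i, hi⟩ : Fin n), (1:Fin 3))
      rw [sum_row1 x hz i hi, if_pos (by omega), if_pos (by omega)] at e1
      have e2 := hs ((⟨i, hi⟩ : Fin n), (2:Fin 3))
      rw [sum_row2 x hz i hi, if_pos (by omega), if_pos (by omega)] at e2
      have p1 := Hh_pos x hpos 0 i (by omega)
      have p2 := Hh_pos x hpos 1 i (by omega)
      have p3 := Hh_pos x hpos 2 i (by omega)
      have p4 := Vv0_pos x hpos i hi
      have p5 := Vv1_pos x hpos i hi
      rcases Nat.even_or_odd i with he | ho
      · have hie : i % 2 = 0 := Nat.even_iff.1 he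
        have hio : (i-1) % 2 = 1 := by omega
        rw [if_neg (by omega : ¬ (i-1) % 2 = 0)] at hH0 hH2 hH1
        rw [if_neg (by omega : ¬ (i-1) = 0)] at hV0 hV1
        refine ⟨?_, ?_, ?_, ?_, ?_⟩
        · rw [if_pos hie]; omega
        · rw [if_pos hie]; omega
        · rw [if_pos hie]; omega
        · rw [if_neg (by omega : ¬ i = 0)]; omega
        · rw [if_neg (by omega : ¬ i = 0)]; omega
      · have hio : i % 2 = 1 := Nat.odd_iff.1 ho
        have hie : (i-1) % 2 = 0 := by omega
        rw [if_pos (by omega : (i-1) % 2 = 0)] at hH0 hH2 hH1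
        rw [if_neg (by omega : ¬ (i-1) = 0)] at hV0 hV1
        refine ⟨?_, ?_, ?_, ?_, ?_⟩
        · rw [if_neg (by omega : ¬ i % 2 = 0)]; omega
        · rw [if_neg (by omega : ¬ i % 2 = 0)]; omega
        · rw [if_neg (by omega : ¬ i % 2 = 0)]; omega
        · rw [if_neg (by omega : ¬ i = 0)]; omega
        · rw [if_neg (by omega : ¬ i = 0)]; omega

lemma last_vals (hz : ∀ e ∉ (gridGraph 3 n).edgeSet, x e = 0)
    (hpos : ∀ e ∈ (gridGraph 3 n).edgeSet, 1 ≤ x e)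
    (hs : ∀ v : GV n, ∑ e ∈ Finset.univ.filter (fun e : Sym2 (GV n) => v ∈ e), x e = 5)
    (hn4 : 4 ≤ n) (hev : Even n) :
    Vv0 x (n-1) = 2 ∧ Vv1 x (n-1) = 2 := by
  obtain ⟨hH0, hH2, _, _, _⟩ := col_vals x hz hpos hs hn4 (n-2) (by omega)
  have hne : (n-2) % 2 = 0 := by
    obtain ⟨k, hk⟩ := hev; omega
  rw [if_pos hne] at hH0 hH2
  have hi : n - 1 < n := by omega
  have e0 := hs ((⟨n-1, hi⟩ : Fin n), (0:Fin 3))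
  rw [sum_row0 x hz (n-1) hi, if_pos (by omega), if_neg (by omega), add_zero] at e0
  have e2 := hs ((⟨n-1, hi⟩ : Fin n), (2:Fin 3))
  rw [sum_row2 x hz (n-1) hi, if_pos (by omega), if_neg (by omega), add_zero] at e2
  have hred : n - 1 - 1 = n - 2 := by omega
  rw [hred] at e0 e2
  omega

end Comb

def hpat (i : ℕ) (j : Fin 3) : ℤ :=
  if j = (1 : Fin 3) then (if i % 2 = 0 then 1 else 2) else (if i % 2 = 0 then 3 else 1)

def vpat (n i : ℕ) : ℤ := if i = 0 ∨ i = n - 1 then 2 else 1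

def xstarF (n : ℕ) (p q : GV n) : ℤ :=
  if p.2 = q.2 ∧ (p.1.val + 1 = q.1.val ∨ q.1.val + 1 = p.1.val) then
    hpat (min p.1.val q.1.val) p.2
  else if p.1 = q.1 ∧ (p.2.val + 1 = q.2.val ∨ q.2.val + 1 = p.2.val) then
    vpat n p.1.val
  else 0

lemma xstarF_symm (p q : GV n) : xstarF n p q = xstarF n q p := by
  unfold xstarF
  by_cases h1 : p.2 = q.2 ∧ (p.1.val + 1 = q.1.val ∨ q.1.val + 1 = p.1.val)
  · have h1' : q.2 = p.2 ∧ (q.1.val + 1 = p.1.val ∨ p.1.val + 1 = q.1.val) :=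
      ⟨h1.1.symm, Or.symm h1.2⟩
    rw [if_pos h1, if_pos h1', Nat.min_comm, h1.1]
  · have h1' : ¬(q.2 = p.2 ∧ (q.1.val + 1 = p.1.val ∨ p.1.val + 1 = q.1.val)) :=
      fun hh => h1 ⟨hh.1.symm, Or.symm hh.2⟩
    rw [if_neg h1, if_neg h1']
    by_cases h2 : p.1 = q.1 ∧ (p.2.val + 1 = q.2.val ∨ q.2.val + 1 = p.2.val)
    · have h2' : q.1 = p.1 ∧ (q.2.val + 1 = p.2.val ∨ p.2.val + 1 = q.2.val) :=
        ⟨h2.1.symm, Or.symm h2.2⟩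
      rw [if_pos h2, if_pos h2', h2.1]
    · have h2' : ¬(q.1 = p.1 ∧ (q.2.val + 1 = p.2.val ∨ p.2.val + 1 = q.2.val)) :=
        fun hh => h2 ⟨hh.1.symm, Or.symm hh.2⟩
      rw [if_neg h2, if_neg h2']

def xstar (n : ℕ) : Sym2 (GV n) → ℤ := Sym2.lift ⟨xstarF n, fun p q => xstarF_symm p q⟩

lemma xstar_mk (p q : GV n) : xstar n s(p, q) = xstarF n p q := Sym2.lift_mk _ p q

lemma xstar_zero : ∀ e ∉ (gridGraph 3 n).edgeSet, xstar n e = 0 := by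
  intro e
  induction e using Sym2.ind with
  | _ p q =>
    intro he
    rw [SimpleGraph.mem_edgeSet, grid_adj_iff] at he
    push_neg at he
    rw [xstar_mk, xstarF]
    rw [if_neg, if_neg]
    · rintro ⟨hh1, hh2⟩
      rcases hh2 with h | h
      · exact (he.2 hh1).1 h
      · exact (he.2 hh1).2 h
    · rintro ⟨hh1, hh2⟩
      rcases hh2 with h | h
      · exact (he.1 hh1).1 h
      · exact (he.1 hh1).2 h

lemma xstar_pos : ∀ e ∈ (gridGraph 3 n).edgeSet, 1 ≤ xstar n e := by
  intro e
  induction e using Sym2.ind with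
  | _ p q =>
    intro he
    rw [SimpleGraph.mem_edgeSet, grid_adj_iff] at he
    rw [xstar_mk, xstarF]
    rcases he with ⟨h1, h2⟩ | ⟨h1, h2⟩
    · rw [if_pos ⟨h1, h2⟩, hpat]
      split_ifs <;> omega
    · rw [if_neg, if_pos ⟨h1, h2⟩]
      · rw [vpat]; split_ifs <;> omega
      · rintro ⟨hr, -⟩
        rw [Fin.ext_iff] at hr
        omega

lemma xstar_H (i : ℕ) (h1 : i + 1 < n) (j : Fin 3) : Hh (xstar n) j i = hpat i j := by
  rw [Hh, dif_pos h1, xstar_mk, xstarF, if_pos ⟨rfl, Or.inl rfl⟩]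
  show hpat (min i (i+1)) j = hpat i j
  rw [Nat.min_eq_left (by omega)]

lemma xstar_V0 (i : ℕ) (hi : i < n) : Vv0 (xstar n) i = vpat n i := by
  rw [Vv0, dif_pos hi, xstar_mk, xstarF, if_neg, if_pos ⟨rfl, Or.inl rfl⟩]
  rintro ⟨hr, -⟩
  exact absurd (Fin.ext_iff.1 hr) (by norm_num)

lemma xstar_V1 (i : ℕ) (hi : i < n) : Vv1 (xstar n) i = vpat n i := by
  rw [Vv1, dif_pos hi, xstar_mk, xstarF, if_neg, if_pos ⟨rfl, Or.inl rfl⟩]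
  rintro ⟨hr, -⟩
  exact absurd (Fin.ext_iff.1 hr) (by norm_num)

lemma xstar_sum (hn4 : 4 ≤ n) (hev : Even n) :
    ∀ v : GV n, ∑ e ∈ Finset.univ.filter (fun e : Sym2 (GV n) => v ∈ e), xstar n e = 5 := by
  have hnn : ∃ k, n = k + k := hev
  obtain ⟨k, hk⟩ := hnn
  rintro ⟨⟨i, hi⟩, j⟩
  have hj3 := j.isLt
  have hz := @xstar_zero n
  rcases Nat.lt_or_ge 0 i with h0 | h0
  · rcases Nat.lt_or_ge (i+1) n with h1 | h1
    · -- interior column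
      have hj : j = 0 ∨ j = 1 ∨ j = 2 := by
        rcases j with ⟨jv, hjv⟩
        interval_cases jv
        · exact Or.inl rfl
        · exact Or.inr (Or.inl rfl)
        · exact Or.inr (Or.inr rfl)
      rcases hj with rfl | rfl | rfl
      · rw [sum_row0 (xstar n) hz i hi, if_pos h0, if_pos h1,
          xstar_H (i-1) (by omega), xstar_H i h1, xstar_V0 i hi, hpat, hpat, vpat,
          if_neg (by decide : ¬ (0:Fin 3) = 1), if_neg (by decide : ¬ (0:Fin 3) = 1),
          if_neg (by omega : ¬ (i = 0 ∨ i = n - 1))]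
        rcases Nat.even_or_odd i with he | ho
        · have h2 : i % 2 = 0 := Nat.even_iff.1 he
          rw [if_neg (by omega : ¬ (i-1) % 2 = 0), if_pos h2]
          norm_num
        · have h2 : i % 2 = 1 := Nat.odd_iff.1 ho
          rw [if_pos (by omega : (i-1) % 2 = 0), if_neg (by omega : ¬ i % 2 = 0)]
          norm_num
      · rw [sum_row1 (xstar n) hz i hi, if_pos h0, if_pos h1,
          xstar_H (i-1) (by omega), xstar_H i h1, xstar_V0 i hi, xstar_V1 i hi,
          hpat, hpat, vpat,
          if_pos (rfl : (1:Fin 3) = 1), if_pos (rfl : (1:Fin 3) = 1),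
          if_neg (by omega : ¬ (i = 0 ∨ i = n - 1))]
        rcases Nat.even_or_odd i with he | ho
        · have h2 : i % 2 = 0 := Nat.even_iff.1 he
          rw [if_neg (by omega : ¬ (i-1) % 2 = 0), if_pos h2]
          norm_num
        · have h2 : i % 2 = 1 := Nat.odd_iff.1 ho
          rw [if_pos (by omega : (i-1) % 2 = 0), if_neg (by omega : ¬ i % 2 = 0)]
          norm_num
      · rw [sum_row2 (xstar n) hz i hi, if_pos h0, if_pos h1,
          xstar_H (i-1) (by omega), xstar_H i h1, xstar_V1 i hi, hpat, hpat, vpat,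
          if_neg (by decide : ¬ (2:Fin 3) = 1), if_neg (by decide : ¬ (2:Fin 3) = 1),
          if_neg (by omega : ¬ (i = 0 ∨ i = n - 1))]
        rcases Nat.even_or_odd i with he | ho
        · have h2 : i % 2 = 0 := Nat.even_iff.1 he
          rw [if_neg (by omega : ¬ (i-1) % 2 = 0), if_pos h2]
          norm_num
        · have h2 : i % 2 = 1 := Nat.odd_iff.1 ho
          rw [if_pos (by omega : (i-1) % 2 = 0), if_neg (by omega : ¬ i % 2 = 0)]
          norm_num
    · -- last column : i = n-1
      have hin : i = n - 1 := by omega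
      have hrd : i - 1 = n - 2 := by omega
      have hj : j = 0 ∨ j = 1 ∨ j = 2 := by
        rcases j with ⟨jv, hjv⟩
        interval_cases jv
        · exact Or.inl rfl
        · exact Or.inr (Or.inl rfl)
        · exact Or.inr (Or.inr rfl)
      rcases hj with rfl | rfl | rfl
      · rw [sum_row0 (xstar n) hz i hi, if_pos h0, if_neg (by omega), add_zero, hrd,
          xstar_H (n-2) (by omega), xstar_V0 i hi, hpat, vpat,
          if_neg (by decide : ¬ (0:Fin 3) = 1),
          if_pos (by omega : (n-2) % 2 = 0), if_pos (Or.inr hin)]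
        norm_num
      · rw [sum_row1 (xstar n) hz i hi, if_pos h0, if_neg (by omega), add_zero, hrd,
          xstar_H (n-2) (by omega), xstar_V0 i hi, xstar_V1 i hi, hpat, vpat,
          if_pos (rfl : (1:Fin 3) = 1),
          if_pos (by omega : (n-2) % 2 = 0), if_pos (Or.inr hin)]
        norm_num
      · rw [sum_row2 (xstar n) hz i hi, if_pos h0, if_neg (by omega), add_zero, hrd,
          xstar_H (n-2) (by omega), xstar_V1 i hi, hpat, vpat,
          if_neg (by decide : ¬ (2:Fin 3) = 1),
          if_pos (by omega : (n-2) % 2 = 0), if_pos (Or.inr hin)]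
        norm_num
  · -- first column: i = 0
    have hi0 : i = 0 := by omega
    subst hi0
    have hj : j = 0 ∨ j = 1 ∨ j = 2 := by
      rcases j with ⟨jv, hjv⟩
      interval_cases jv
      · exact Or.inl rfl
      · exact Or.inr (Or.inl rfl)
      · exact Or.inr (Or.inr rfl)
    rcases hj with rfl | rfl | rfl
    · rw [sum_row0 (xstar n) hz 0 hi, if_neg (by omega), if_pos (by omega), zero_add,
        xstar_H 0 (by omega), xstar_V0 0 hi, hpat, vpat,
        if_neg (by decide : ¬ (0:Fin 3) = 1), if_pos (by norm_num : (0:ℕ) % 2 = 0),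
        if_pos (Or.inl rfl)]
      norm_num
    · rw [sum_row1 (xstar n) hz 0 hi, if_neg (by omega), if_pos (by omega), zero_add,
        xstar_H 0 (by omega), xstar_V0 0 hi, xstar_V1 0 hi, hpat, vpat,
        if_pos (rfl : (1:Fin 3) = 1), if_pos (by norm_num : (0:ℕ) % 2 = 0),
        if_pos (Or.inl rfl)]
      norm_num
    · rw [sum_row2 (xstar n) hz 0 hi, if_neg (by omega), if_pos (by omega), zero_add,
        xstar_H 0 (by omega), xstar_V1 0 hi, hpat, vpat,
        if_neg (by decide : ¬ (2:Fin 3) = 1), if_pos (by norm_num : (0:ℕ) % 2 = 0),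
        if_pos (Or.inl rfl)]
      norm_num



lemma unique5 (x : Sym2 (GV n) → ℤ)
    (hz : ∀ e ∉ (gridGraph 3 n).edgeSet, x e = 0)
    (hpos : ∀ e ∈ (gridGraph 3 n).edgeSet, 1 ≤ x e)
    (hs : ∀ v : GV n, ∑ e ∈ Finset.univ.filter (fun e : Sym2 (GV n) => v ∈ e), x e = 5)
    (hn4 : 4 ≤ n) (hev : Even n) : x = xstar n := by
  have hcv := col_vals x hz hpos hs hn4
  have hlv := last_vals x hz hpos hs hn4 hev
  have hHval : ∀ (i : ℕ), i + 1 < n → ∀ j : Fin 3, Hh x j i = hpat i j := by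
    intro i h1 j
    obtain ⟨c0, c2, c1, -, -⟩ := hcv i h1
    have hj : j = 0 ∨ j = 1 ∨ j = 2 := by
      rcases j with ⟨jv, hjv⟩
      interval_cases jv
      · exact Or.inl rfl
      · exact Or.inr (Or.inl rfl)
      · exact Or.inr (Or.inr rfl)
    rcases hj with rfl | rfl | rfl
    · rw [c0, hpat, if_neg (by decide : ¬ (0:Fin 3) = 1)]
    · rw [c1, hpat, if_pos (rfl : (1:Fin 3) = 1)]
    · rw [c2, hpat, if_neg (by decide : ¬ (2:Fin 3) = 1)]
  have hV0val : ∀ (i : ℕ), i < n → Vv0 x i = vpat n i := by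
    intro i hi
    by_cases h1 : i + 1 < n
    · obtain ⟨-, -, -, v0, -⟩ := hcv i h1
      rw [v0, vpat]
      by_cases hi0 : i = 0
      · rw [if_pos hi0, if_pos (Or.inl hi0)]
      · rw [if_neg hi0, if_neg (by omega)]
    · have hieq : i = n - 1 := by omega
      rw [hieq, hlv.1, vpat, if_pos (Or.inr rfl)]
  have hV1val : ∀ (i : ℕ), i < n → Vv1 x i = vpat n i := by
    intro i hi
    by_cases h1 : i + 1 < n
    · obtain ⟨-, -, -, -, v1⟩ := hcv i h1
      rw [v1, vpat]
      by_cases hi0 : i = 0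
      · rw [if_pos hi0, if_pos (Or.inl hi0)]
      · rw [if_neg hi0, if_neg (by omega)]
    · have hieq : i = n - 1 := by omega
      rw [hieq, hlv.2, vpat, if_pos (Or.inr rfl)]
  funext e
  induction e using Sym2.ind with
  | _ p q =>
    by_cases hadj : (gridGraph 3 n).Adj p q
    case neg =>
      rw [hz _ (fun hm => hadj (by rwa [SimpleGraph.mem_edgeSet] at hm)),
        xstar_zero _ (fun hm => hadj (by rwa [SimpleGraph.mem_edgeSet] at hm))]
    case pos =>
      rw [grid_adj_iff] at hadj
      obtain ⟨⟨a, ha⟩, b⟩ := p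
      obtain ⟨⟨c, hc⟩, d⟩ := q
      rcases hadj with ⟨hrow, hcol⟩ | ⟨hcol, hrow⟩
      · have hbd : b = d := hrow
        subst hbd
        simp only [] at hcol
        rcases hcol with h | h
        · have hcfin : (⟨c, hc⟩ : Fin n) = ⟨a+1, by omega⟩ := Fin.ext (by simp; omega)
          rw [hcfin, X_right x a ha (by omega) b, X_right (xstar n) a ha (by omega) b,
            xstar_H a (by omega) b, hHval a (by omega) b]
        · have hafin : (⟨a, ha⟩ : Fin n) = ⟨c+1, by omega⟩ := Fin.ext (by simp; omega)
          rw [show s(((⟨a,ha⟩:Fin n), b), ((⟨c,hc⟩:Fin n), b))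
              = s(((⟨c,hc⟩:Fin n), b), ((⟨a,ha⟩:Fin n), b)) from Sym2.eq_swap]
          rw [hafin, X_right x c hc (by omega) b, X_right (xstar n) c hc (by omega) b,
            xstar_H c (by omega) b, hHval c (by omega) b]
      · dsimp only at hcol hrow
        rw [← hcol]
        obtain ⟨bv, hb3⟩ := b
        obtain ⟨dv, hd3⟩ := d
        simp only [] at hrow
        interval_cases bv <;> interval_cases dv
        · simp at hrow
        · rw [show (⟨0, hb3⟩ : Fin 3) = (0:Fin 3) from rfl,
            show (⟨1, hd3⟩ : Fin 3) = (1:Fin 3) from rfl,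
            Xv01 x a ha, Xv01 (xstar n) a ha, xstar_V0 a ha, hV0val a ha]
        · simp at hrow
        · rw [show (⟨1, hb3⟩ : Fin 3) = (1:Fin 3) from rfl,
            show (⟨0, hd3⟩ : Fin 3) = (0:Fin 3) from rfl]
          rw [show s(((⟨a,ha⟩:Fin n), (1:Fin 3)), ((⟨a,ha⟩:Fin n), (0:Fin 3)))
              = s(((⟨a,ha⟩:Fin n), (0:Fin 3)), ((⟨a,ha⟩:Fin n), (1:Fin 3))) from Sym2.eq_swap]
          rw [Xv01 x a ha, Xv01 (xstar n) a ha, xstar_V0 a ha, hV0val a ha]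
        · simp at hrow
        · rw [show (⟨1, hb3⟩ : Fin 3) = (1:Fin 3) from rfl,
            show (⟨2, hd3⟩ : Fin 3) = (2:Fin 3) from rfl,
            Xv12 x a ha, Xv12 (xstar n) a ha, xstar_V1 a ha, hV1val a ha]
        · simp at hrow
        · rw [show (⟨2, hb3⟩ : Fin 3) = (2:Fin 3) from rfl,
            show (⟨1, hd3⟩ : Fin 3) = (1:Fin 3) from rfl]
          rw [show s(((⟨a,ha⟩:Fin n), (2:Fin 3)), ((⟨a,ha⟩:Fin n), (1:Fin 3)))
              = s(((⟨a,ha⟩:Fin n), (1:Fin 3)), ((⟨a,ha⟩:Fin n), (2:Fin 3))) from Sym2.eq_swap]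
          rw [Xv12 x a ha, Xv12 (xstar n) a ha, xstar_V1 a ha, hV1val a ha]
        · simp at hrow


end GridAux


/-- For even `n ≥ 4`, the dilates `t P(3,n)` for `t = 1, 2, 3, 4`
contain no lattice point in their relative interior, and `5 P(3,n)` contains exactly
one lattice point in its relative interior. -/
theorem grid_three_interior_points (n : ℕ) (hn : 4 ≤ n) (hne : Even n) :
    (∀ t : ℕ, 1 ≤ t → t ≤ 4 → interiorLatticeCount (pmPolytope (gridGraph 3 n)) t = 0) ∧
    interiorLatticeCount (pmPolytope (gridGraph 3 n)) 5 = 1 := by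
  classical
  have hn0 : 0 < n := by omega
  have hxsum := GridAux.xstar_sum (n := n) hn hne
  have hxz := @GridAux.xstar_zero n
  have hxpos := @GridAux.xstar_pos n
  have hU : ∀ T : ℝ, 0 < T →
      (fun e => T / 5 * ((GridAux.xstar n e : ℤ) : ℝ)) ∈ GridAux.gU n T := by
    intro T hT
    refine ⟨?_, ?_, ?_⟩
    · intro e he
      show T / 5 * ((GridAux.xstar n e : ℤ) : ℝ) = 0
      rw [hxz e he]
      norm_num
    · intro v
      show ∑ e ∈ Finset.univ.filter (fun e : Sym2 (Fin n × Fin 3) => v ∈ e),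
        T / 5 * ((GridAux.xstar n e : ℤ) : ℝ) = T
      rw [← Finset.mul_sum, ← Int.cast_sum, hxsum v]
      push_cast
      ring
    · intro e he
      show 0 < T / 5 * ((GridAux.xstar n e : ℤ) : ℝ)
      have h1 : (1:ℝ) ≤ ((GridAux.xstar n e : ℤ) : ℝ) := by exact_mod_cast hxpos e he
      nlinarith
  have hkey : ∀ T : ℝ, 0 < T →
      intrinsicInterior ℝ (T • pmPolytope (gridGraph 3 n)) = GridAux.gU n T := by
    intro T hT
    rw [GridAux.smul_pm_eq hn0 hne T hT]
    exact GridAux.intrinsic_eq T _ (hU T hT)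
  constructor
  · intro t ht1 ht4
    have hIE : IsEmpty {x : Sym2 (Fin n × Fin 3) → ℤ //
        (fun i => (x i : ℝ)) ∈ intrinsicInterior ℝ ((t : ℝ) • pmPolytope (gridGraph 3 n))} := by
      constructor
      rintro ⟨y, hy⟩
      rw [hkey (t:ℝ) (by exact_mod_cast Nat.cast_pos.2 (by omega : 0 < t))] at hy
      obtain ⟨hz', hs', hp'⟩ := hy
      have hzI : ∀ e ∉ (gridGraph 3 n).edgeSet, y e = 0 := fun e he => by
        have h0 : ((y e : ℤ) : ℝ) = 0 := hz' e he
        exact_mod_cast h0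
      have hpI : ∀ e ∈ (gridGraph 3 n).edgeSet, 1 ≤ y e := fun e he => by
        have h0 : (0:ℝ) < ((y e : ℤ) : ℝ) := hp' e he
        have h2 : (0:ℤ) < y e := by exact_mod_cast h0
        omega
      have hsI : ∀ v : Fin n × Fin 3,
          ∑ e ∈ Finset.univ.filter (fun e : Sym2 (Fin n × Fin 3) => v ∈ e), y e = (t:ℤ) := by
        intro v
        have h2 := hs' v
        have h3 : ((∑ e ∈ Finset.univ.filter
            (fun e : Sym2 (Fin n × Fin 3) => v ∈ e), y e : ℤ) : ℝ) = ((t:ℕ):ℝ) := by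
          rw [Int.cast_sum]
          exact h2
        exact_mod_cast h3
      exact GridAux.no_small y hzI hpI (t:ℤ) hsI hn (by exact_mod_cast ht4)
    exact @Nat.card_of_isEmpty _ hIE
  · have hmem : (fun i => ((GridAux.xstar n i : ℤ) : ℝ)) ∈
        intrinsicInterior ℝ (((5:ℕ) : ℝ) • pmPolytope (gridGraph 3 n)) := by
      rw [hkey _ (by norm_num)]
      refine ⟨?_, ?_, ?_⟩
      · intro e he
        show ((GridAux.xstar n e : ℤ) : ℝ) = 0
        rw [hxz e he]
        norm_num
      · intro v
        show ∑ e ∈ Finset.univ.filter (fun e : Sym2 (Fin n × Fin 3) => v ∈ e),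
          ((GridAux.xstar n e : ℤ) : ℝ) = ((5:ℕ):ℝ)
        rw [← Int.cast_sum, hxsum v]
        norm_num
      · intro e he
        show 0 < ((GridAux.xstar n e : ℤ) : ℝ)
        have h1 : (1:ℝ) ≤ ((GridAux.xstar n e : ℤ) : ℝ) := by exact_mod_cast hxpos e he
        linarith
    have hUniq : Unique {x : Sym2 (Fin n × Fin 3) → ℤ //
        (fun i => (x i : ℝ)) ∈ intrinsicInterior ℝ (((5:ℕ):ℝ) • pmPolytope (gridGraph 3 n))} := by
      refine ⟨⟨⟨GridAux.xstar n, hmem⟩⟩, ?_⟩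
      rintro ⟨y, hy⟩
      apply Subtype.ext
      show y = GridAux.xstar n
      rw [hkey _ (by norm_num)] at hy
      obtain ⟨hz', hs', hp'⟩ := hy
      have hzI : ∀ e ∉ (gridGraph 3 n).edgeSet, y e = 0 := fun e he => by
        have h0 : ((y e : ℤ) : ℝ) = 0 := hz' e he
        exact_mod_cast h0
      have hpI : ∀ e ∈ (gridGraph 3 n).edgeSet, 1 ≤ y e := fun e he => by
        have h0 : (0:ℝ) < ((y e : ℤ) : ℝ) := hp' e he
        have h2 : (0:ℤ) < y e := by exact_mod_cast h0
        omega
      have hsI : ∀ v : Fin n × Fin 3,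
          ∑ e ∈ Finset.univ.filter (fun e : Sym2 (Fin n × Fin 3) => v ∈ e), y e = 5 := by
        intro v
        have h2 := hs' v
        have h3 : ((∑ e ∈ Finset.univ.filter
            (fun e : Sym2 (Fin n × Fin 3) => v ∈ e), y e : ℤ) : ℝ) = ((5:ℕ):ℝ) := by
          rw [Int.cast_sum]
          exact h2
        exact_mod_cast h3
      exact GridAux.unique5 y hzI hpI hsI hn hne
    haveI := hUniq
    exact Nat.card_unique
end
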